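/- arXiv:2602.24194 — 2 statements merged into one kernel-verified Lean document; each statement's English description precedes it below -/
import Mathlib

section
/- Consider agents i = 2,…,n with EU functionals U_i(X) = E_P[u_i(X)] on a nonatomic probability space, and fix a bounded random variable Y. For a vector (X₂,…,Xₙ) of bounded random variables with Σ_{i=2}^n X_i = Y a.s.: (1) (X₂,…,Xₙ) is Y-Pareto optimal if and only if there exists a weight vector λ = (λ₂,…,λₙ) with all λ_i > 0 such that (X₂,…,Xₙ) maximizes Σ_{i=2}^n λ_i U_i(X_i) over all vectors of bounded random variables summing a.s. to Y; (2) for a given such λ, (X₂,…,Xₙ) maximizes Σ_{i=2}^n λ_i U_i(X_i) over all vectors of bounded random variables summing a.s. to Y if and only if λ_i u_i′(X_i) = λ_j u_j′(X_j) a.s. for all i, j ∈ {2,…,n}. -/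
open MeasureTheory Set

noncomputable section

variable {Ω : Type*} [MeasurableSpace Ω]

/-- The cumulative distribution function `F_X(x) = P(X ≤ x)` of a random variable. -/
def cdfR (P : Measure Ω) (X : Ω → ℝ) (x : ℝ) : ℝ := (P {ω | X ω ≤ x}).toReal

/-- The left-continuous quantile function `F_X⁻¹(t) = inf {x | F_X(x) ≥ t}`. -/
def quantR (P : Measure Ω) (X : Ω → ℝ) (t : ℝ) : ℝ := sInf {x : ℝ | t ≤ cdfR P X x}

/-- A bounded (measurable) random variable. -/
def IsBddRV (X : Ω → ℝ) : Prop := Measurable X ∧ ∃ C : ℝ, ∀ ω, |X ω| ≤ C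

/-- Comonotonicity of two random variables. -/
def ComonRV (Y Z : Ω → ℝ) : Prop := ∀ ω ω' : Ω, 0 ≤ (Y ω - Y ω') * (Z ω - Z ω')

/-- `U` is uniformly distributed on `(0,1)` under `P`. -/
def UnifOn01 (P : Measure Ω) (U : Ω → ℝ) : Prop :=
  Measurable U ∧ ∀ t ∈ Icc (0:ℝ) 1, cdfR P U t = t

/-- A nonatomic measure. -/
def NonatomicM (P : Measure Ω) : Prop :=
  ∀ s : Set Ω, MeasurableSet s → P s ≠ 0 →
    ∃ t : Set Ω, MeasurableSet t ∧ t ⊆ s ∧ 0 < P t ∧ P t < P s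

/-- Expected utility. -/
def EUf (P : Measure Ω) (u : ℝ → ℝ) (X : Ω → ℝ) : ℝ := ∫ ω, u (X ω) ∂P

/-- The conjugate `T̃(t) = 1 - T(1-t)` of a probability weighting function. -/
def conjW (T : ℝ → ℝ) : ℝ → ℝ := fun t => 1 - T (1 - t)

/-- Rank-dependent utility `∫₀¹ u(F_X⁻¹(t)) Tc′(t) dt`, where `Tc` is the conjugate
probability weighting function. -/
def RDUf (P : Measure Ω) (u : ℝ → ℝ) (Tc : ℝ → ℝ) (X : Ω → ℝ) : ℝ :=
  ∫ t in Ioo (0:ℝ) 1, u (quantR P X t) * deriv Tc t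

/-- A probability weighting function: maps `[0,1]` to `[0,1]`, twice differentiable,
strictly increasing, `T(0) = 0`, `T(1) = 1`. -/
def IsPWF (T : ℝ → ℝ) : Prop :=
  (∀ t ∈ Icc (0:ℝ) 1, T t ∈ Icc (0:ℝ) 1) ∧ StrictMonoOn T (Icc (0:ℝ) 1) ∧
    (∀ t ∈ Icc (0:ℝ) 1, DifferentiableAt ℝ T t) ∧
    (∀ t ∈ Icc (0:ℝ) 1, DifferentiableAt ℝ (deriv T) t) ∧ T 0 = 0 ∧ T 1 = 1

/-- A utility function: twice differentiable, strictly concave, strictly increasing. -/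
def IsUtility (u : ℝ → ℝ) : Prop :=
  (∀ x, DifferentiableAt ℝ u x) ∧ (∀ x, DifferentiableAt ℝ (deriv u) x) ∧
    StrictConcaveOn ℝ univ u ∧ StrictMono u

/-- `d` is the convex envelope of `g` on `[0,1]`: the greatest convex function
below `g` on `[0,1]`. -/
def IsConvexEnvelope (g d : ℝ → ℝ) : Prop :=
  ConvexOn ℝ (Icc (0:ℝ) 1) d ∧ (∀ t ∈ Icc (0:ℝ) 1, d t ≤ g t) ∧
    ∀ h : ℝ → ℝ, ConvexOn ℝ (Icc (0:ℝ) 1) h → (∀ t ∈ Icc (0:ℝ) 1, h t ≤ g t) →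
      ∀ t ∈ Icc (0:ℝ) 1, h t ≤ d t

/-- Feasible allocations: bounded random variables summing a.s. to the constant `w`. -/
def AllocC (P : Measure Ω) {m : ℕ} (w : ℝ) (X : Fin m → Ω → ℝ) : Prop :=
  (∀ i, IsBddRV (X i)) ∧ ∀ᵐ ω ∂P, (∑ i, X i ω) = w

/-- A quantile function: a nondecreasing left-continuous function on `(0,1)`. -/
def IsQuantFun (f : ℝ → ℝ) : Prop :=
  MonotoneOn f (Ioo (0:ℝ) 1) ∧ ∀ t ∈ Ioo (0:ℝ) 1, ContinuousWithinAt f (Iic t) t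

/-- `I_i := (u_i′)⁻¹`, the inverse marginal utility. -/
def invMarg (u : ℝ → ℝ) : ℝ → ℝ := Function.invFun (deriv u)

end

noncomputable section

open MeasureTheory Set

/-- Feasible allocations among the EU agents: bounded random variables summing a.s. to `Y`. -/
def FeasSum {Ω : Type*} [MeasurableSpace Ω] (P : Measure Ω) {m : ℕ} (Y : Ω → ℝ)
    (X : Fin m → Ω → ℝ) : Prop :=
  (∀ i, IsBddRV (X i)) ∧ ∀ᵐ ω ∂P, (∑ i, X i ω) = Y ω


section Helpers
variable {Ω : Type*} [MeasurableSpace Ω]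

theorem IsUtility.cont {u : ℝ → ℝ} (hu : IsUtility u) : Continuous u :=
  continuous_iff_continuousAt.2 fun x => (hu.1 x).continuousAt

theorem IsUtility.contDeriv {u : ℝ → ℝ} (hu : IsUtility u) : Continuous (deriv u) :=
  continuous_iff_continuousAt.2 fun x => (hu.2.1 x).continuousAt

theorem IsUtility.tangent {u : ℝ → ℝ} (hu : IsUtility u) (x y : ℝ) :
    u y ≤ u x + deriv u x * (y - x) := by
  have hc : ConcaveOn ℝ univ u := hu.2.2.1.concaveOn
  rcases lt_trichotomy x y with h | h | h
  · have h2 := hc.slope_le_deriv (mem_univ x) (mem_univ y) h (hu.1 x)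
    rw [slope_def_field] at h2
    rw [div_le_iff₀ (by linarith : (0:ℝ) < y - x)] at h2
    linarith
  · simp [h]
  · have h2 := hc.deriv_le_slope (mem_univ y) (mem_univ x) h (hu.1 x)
    rw [slope_def_field] at h2
    rw [le_div_iff₀ (by linarith : (0:ℝ) < x - y)] at h2
    linarith

theorem IsUtility.deriv_pos {u : ℝ → ℝ} (hu : IsUtility u) (x : ℝ) : 0 < deriv u x := by
  have hc : ConcaveOn ℝ univ u := hu.2.2.1.concaveOn
  have h2 := hc.slope_le_deriv (mem_univ x) (mem_univ (x + 1)) (by linarith) (hu.1 x)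
  rw [slope_def_field] at h2
  have h3 : u x < u (x + 1) := hu.2.2.2 (by linarith)
  have : (0:ℝ) < (u (x+1) - u x) / (x + 1 - x) := by
    apply div_pos
    · linarith
    · linarith
  linarith

theorem IsUtility.gain_ge {u : ℝ → ℝ} (hu : IsUtility u) (x c : ℝ) :
    c * deriv u (x + c) ≤ u (x + c) - u x := by
  have h0 := hu.tangent (x + c) x
  have h : x - (x + c) = -c := by ring
  rw [h] at h0
  nlinarith [h0]

theorem IsUtility.modulus {u : ℝ → ℝ} (hu : IsUtility u) (K : ℝ) {η : ℝ} (hη : 0 < η) :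
    ∃ ρ > 0, ∀ x y : ℝ, |x| ≤ K → |y| ≤ K → |x - y| ≤ ρ →
      |deriv u x - deriv u y| ≤ η := by
  have huc : UniformContinuousOn (deriv u) (Icc (-K) K) :=
    (isCompact_Icc).uniformContinuousOn_of_continuous hu.contDeriv.continuousOn
  rw [Metric.uniformContinuousOn_iff_le] at huc
  obtain ⟨ρ, hρ, h⟩ := huc η hη
  refine ⟨ρ, hρ, fun x y hx hy hxy => ?_⟩
  have := h x (mem_Icc.2 ⟨by linarith [(abs_le.1 hx).1], (abs_le.1 hx).2⟩)
    y (mem_Icc.2 ⟨by linarith [(abs_le.1 hy).1], (abs_le.1 hy).2⟩)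
    (by rwa [Real.dist_eq])
  rwa [Real.dist_eq] at this

theorem IsUtility.derivBound {u : ℝ → ℝ} (hu : IsUtility u) (K : ℝ) (hK : 0 ≤ K) :
    ∃ m : ℝ, 0 < m ∧ ∀ x : ℝ, |x| ≤ K → m ≤ deriv u x := by
  have hne : (Icc (-K) K).Nonempty := ⟨0, mem_Icc.2 ⟨by linarith, hK⟩⟩
  obtain ⟨z, hz, hmin⟩ := (isCompact_Icc (a := -K) (b := K)).exists_isMinOn hne
    hu.contDeriv.continuousOn
  exact ⟨deriv u z, hu.deriv_pos z, fun x hx => hmin (mem_Icc.2 (abs_le.1 hx))⟩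

theorem sum_two {n : ℕ} {i j : Fin n} (hij : i ≠ j) (f : Fin n → ℝ)
    (h : ∀ k, k ≠ i → k ≠ j → f k = 0) : ∑ k, f k = f i + f j := by
  rw [← Finset.sum_pair hij]
  exact (Finset.sum_subset (Finset.subset_univ _)
    (fun k _ hk => h k (by simp at hk; exact hk.1) (by simp at hk; exact hk.2))).symm

theorem integrable_of_bdd {P : Measure Ω} [IsFiniteMeasure P] {f : Ω → ℝ}
    (hf : Measurable f) {C : ℝ} (h : ∀ ω, |f ω| ≤ C) : Integrable f P := by
  refine (integrable_const C).mono' hf.aestronglyMeasurable (ae_of_all _ ?_)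
  intro ω; simpa [Real.norm_eq_abs] using h ω

theorem integrable_compRV {P : Measure Ω} [IsProbabilityMeasure P] {g : ℝ → ℝ}
    (hg : Continuous g) {X : Ω → ℝ} (hX : IsBddRV X) :
    Integrable (fun ω => g (X ω)) P := by
  obtain ⟨C, hC⟩ := hX.2
  obtain ⟨D, hD⟩ := (isCompact_Icc (a := -C) (b := C)).exists_bound_of_continuousOn
    hg.continuousOn
  refine integrable_of_bdd (hg.measurable.comp hX.1) (C := D) fun ω => ?_
  have := hD (X ω) (abs_le.1 (hC ω))
  simpa [Real.norm_eq_abs] using this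

theorem IsBddRV.addConst {X : Ω → ℝ} (hX : IsBddRV X) (c : ℝ) :
    IsBddRV (fun ω => X ω + c) := by
  obtain ⟨C, hC⟩ := hX.2
  exact ⟨hX.1.add measurable_const, C + |c|,
    fun ω => (abs_add_le _ _).trans (by linarith [hC ω, le_abs_self c])⟩

theorem IsBddRV.shift2 {X : Ω → ℝ} (hX : IsBddRV X) {A B : Set Ω}
    (hA : MeasurableSet A) (hB : MeasurableSet B) (cA cB : ℝ) :
    IsBddRV (fun ω => X ω + A.indicator (fun _ => cA) ω + B.indicator (fun _ => cB) ω) := by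
  obtain ⟨C, hC⟩ := hX.2
  refine ⟨(hX.1.add (measurable_const.indicator hA)).add (measurable_const.indicator hB),
    C + |cA| + |cB|, fun ω => ?_⟩
  have h1 : |A.indicator (fun _ => cA) ω| ≤ |cA| := by
    by_cases h : ω ∈ A <;> simp [indicator_of_mem, indicator_of_notMem, h, abs_nonneg]
  have h2 : |B.indicator (fun _ => cB) ω| ≤ |cB| := by
    by_cases h : ω ∈ B <;> simp [indicator_of_mem, indicator_of_notMem, h, abs_nonneg]
  calc |X ω + A.indicator (fun _ => cA) ω + B.indicator (fun _ => cB) ω|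
      ≤ |X ω + A.indicator (fun _ => cA) ω| + |B.indicator (fun _ => cB) ω| := abs_add_le _ _
    _ ≤ |X ω| + |A.indicator (fun _ => cA) ω| + |B.indicator (fun _ => cB) ω| := by
        have := abs_add_le (X ω) (A.indicator (fun _ => cA) ω); linarith
    _ ≤ C + |cA| + |cB| := by linarith [hC ω]

theorem IsBddRV.shift1 {X : Ω → ℝ} (hX : IsBddRV X) {A : Set Ω}
    (hA : MeasurableSet A) (c : ℝ) :
    IsBddRV (fun ω => X ω + A.indicator (fun _ => c) ω) := by
  obtain ⟨C, hC⟩ := hX.2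
  refine ⟨hX.1.add (measurable_const.indicator hA), C + |c|, fun ω => ?_⟩
  have h1 : |A.indicator (fun _ => c) ω| ≤ |c| := by
    by_cases h : ω ∈ A <;> simp [indicator_of_mem, indicator_of_notMem, h, abs_nonneg]
  exact (abs_add_le _ _).trans (by linarith [hC ω])

theorem EU_shift2 {P : Measure Ω} [IsProbabilityMeasure P] {u : ℝ → ℝ} (hu : IsUtility u)
    {X : Ω → ℝ} (hX : IsBddRV X) {A B : Set Ω} (hA : MeasurableSet A) (hB : MeasurableSet B)
    (hAB : Disjoint A B) (cA cB : ℝ) :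
    EUf P u (fun ω => X ω + A.indicator (fun _ => cA) ω + B.indicator (fun _ => cB) ω)
        - EUf P u X
      = (∫ ω in A, (u (X ω + cA) - u (X ω)) ∂P) + ∫ ω in B, (u (X ω + cB) - u (X ω)) ∂P := by
  set X' := fun ω => X ω + A.indicator (fun _ => cA) ω + B.indicator (fun _ => cB) ω with hX'def
  have hX' : IsBddRV X' := hX.shift2 hA hB cA cB
  have h1 : Integrable (fun ω => u (X' ω)) P := integrable_compRV hu.cont hX'
  have h2 : Integrable (fun ω => u (X ω)) P := integrable_compRV hu.cont hX
  have hfa : Integrable (fun ω => u (X ω + cA) - u (X ω)) P :=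
    (integrable_compRV hu.cont (hX.addConst cA)).sub h2
  have hfb : Integrable (fun ω => u (X ω + cB) - u (X ω)) P :=
    (integrable_compRV hu.cont (hX.addConst cB)).sub h2
  have key : (fun ω => u (X' ω) - u (X ω))
      = (fun ω => A.indicator (fun ω => u (X ω + cA) - u (X ω)) ω
          + B.indicator (fun ω => u (X ω + cB) - u (X ω)) ω) := by
    funext ω
    by_cases hmA : ω ∈ A
    · have hmB : ω ∉ B := disjoint_left.1 hAB hmA
      simp [hX'def, indicator_of_mem, indicator_of_notMem, hmA, hmB]
    · by_cases hmB : ω ∈ B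
      · simp [hX'def, indicator_of_mem, indicator_of_notMem, hmA, hmB]
      · simp [hX'def, indicator_of_notMem, hmA, hmB]
  calc EUf P u X' - EUf P u X = ∫ ω, (u (X' ω) - u (X ω)) ∂P := (integral_sub h1 h2).symm
    _ = ∫ ω, (A.indicator (fun ω => u (X ω + cA) - u (X ω)) ω
          + B.indicator (fun ω => u (X ω + cB) - u (X ω)) ω) ∂P := by rw [key]
    _ = (∫ ω, A.indicator (fun ω => u (X ω + cA) - u (X ω)) ω ∂P)
          + ∫ ω, B.indicator (fun ω => u (X ω + cB) - u (X ω)) ω ∂P :=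
        integral_add (hfa.indicator hA) (hfb.indicator hB)
    _ = (∫ ω in A, (u (X ω + cA) - u (X ω)) ∂P) + ∫ ω in B, (u (X ω + cB) - u (X ω)) ∂P := by
        rw [integral_indicator hA, integral_indicator hB]

theorem EU_shift1 {P : Measure Ω} [IsProbabilityMeasure P] {u : ℝ → ℝ} (hu : IsUtility u)
    {X : Ω → ℝ} (hX : IsBddRV X) {A : Set Ω} (hA : MeasurableSet A) (c : ℝ) :
    EUf P u (fun ω => X ω + A.indicator (fun _ => c) ω) - EUf P u X
      = ∫ ω in A, (u (X ω + c) - u (X ω)) ∂P := by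
  have h := EU_shift2 (P := P) hu hX hA MeasurableSet.empty (disjoint_empty A) c 0
  simpa [Set.indicator_empty, Measure.restrict_empty] using h

theorem ae_const_of_levels {P : Measure Ω} [IsProbabilityMeasure P] {R : Ω → ℝ}
    (Cl Cu : ℝ) (hbdd : ∀ ω, R ω ∈ Icc Cl Cu)
    (h : ∀ a b : ℝ, a < b → P {ω | R ω < a} = 0 ∨ P {ω | b < R ω} = 0) :
    ∃ c, ∀ᵐ ω ∂P, R ω = c := by
  set S := {x : ℝ | P {ω | x < R ω} = 0} with hS
  have hSne : S.Nonempty := ⟨Cu, by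
    have he : {ω | Cu < R ω} = ∅ := by
      ext ω; simp only [mem_setOf_eq, mem_empty_iff_false, iff_false, not_lt]
      exact (hbdd ω).2
    simp [hS, he]⟩
  have hSbdd : BddBelow S := by
    refine ⟨Cl - 1, fun x hx => ?_⟩
    by_contra hc
    push_neg at hc
    have he : {ω | x < R ω} = univ := by
      ext ω; simp only [mem_setOf_eq, mem_univ, iff_true]
      linarith [(hbdd ω).1]
    rw [hS, mem_setOf_eq, he] at hx
    simp at hx
  set c := sInf S with hc
  have hub : ∀ b, c < b → P {ω | b < R ω} = 0 := by
    intro b hb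
    obtain ⟨x, hxS, hxb⟩ := exists_lt_of_csInf_lt hSne hb
    exact measure_mono_null (fun ω hω => lt_trans hxb hω) hxS
  have hlb : ∀ a, a < c → P {ω | R ω < a} = 0 := by
    intro a ha
    obtain ⟨b, hab, hbc⟩ := exists_between ha
    rcases h a b hab with h1 | h1
    · exact h1
    · exact absurd (csInf_le hSbdd h1) (not_le.2 hbc)
  refine ⟨c, ?_⟩
  rw [ae_iff]
  have hsub : {ω | ¬ R ω = c} ⊆
      (⋃ q : {q : ℚ // (q : ℝ) < c}, {ω | R ω < (q : ℝ)}) ∪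
      (⋃ q : {q : ℚ // c < (q : ℝ)}, {ω | (q : ℝ) < R ω}) := by
    intro ω hω
    rcases lt_or_gt_of_ne hω with hlt | hgt
    · obtain ⟨q, hq1, hq2⟩ := exists_rat_btwn hlt
      exact Or.inl (mem_iUnion.2 ⟨⟨q, hq2⟩, hq1⟩)
    · obtain ⟨q, hq1, hq2⟩ := exists_rat_btwn hgt
      exact Or.inr (mem_iUnion.2 ⟨⟨q, hq1⟩, hq2⟩)
  refine measure_mono_null hsub (measure_union_null ?_ ?_)
  · exact measure_iUnion_null fun q => hlb _ q.2
  · exact measure_iUnion_null fun q => hub _ q.2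


theorem lemA {P : Measure Ω} [IsProbabilityMeasure P]
    {n : ℕ} (hn : 1 ≤ n) {u : Fin n → ℝ → ℝ} (hu : ∀ i, IsUtility (u i))
    {Y : Ω → ℝ} {X : Fin n → Ω → ℝ} (hX : FeasSum P Y X)
    {lam : Fin n → ℝ} (hlam : ∀ i, 0 < lam i)
    (hfoc : ∀ i j, ∀ᵐ ω ∂P, lam i * deriv (u i) (X i ω) = lam j * deriv (u j) (X j ω)) :
    ∀ X' : Fin n → Ω → ℝ, FeasSum P Y X' →
      (∑ i, lam i * EUf P (u i) (X' i)) ≤ ∑ i, lam i * EUf P (u i) (X i) := by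
  intro X' hX'
  have hint : ∀ (Z : Fin n → Ω → ℝ), (∀ i, IsBddRV (Z i)) → ∀ i : Fin n,
      Integrable (fun ω => lam i * u i (Z i ω)) P := fun Z hZ i =>
    (integrable_compRV (hu i).cont (hZ i)).const_mul _
  have hsum : ∀ (Z : Fin n → Ω → ℝ), (∀ i, IsBddRV (Z i)) →
      (∑ i, lam i * EUf P (u i) (Z i)) = ∫ ω, (∑ i, lam i * u i (Z i ω)) ∂P := by
    intro Z hZ
    rw [integral_finset_sum _ (fun i _ => hint Z hZ i)]
    exact Finset.sum_congr rfl fun i _ => (integral_const_mul _ _).symm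
  set i0 : Fin n := ⟨0, hn⟩
  have hae : ∀ᵐ ω ∂P, (∑ i, lam i * u i (X' i ω)) ≤ ∑ i, lam i * u i (X i ω) := by
    filter_upwards [hX.2, hX'.2, ae_all_iff.2 fun i => hfoc i i0] with ω hXs hX's hfocω
    set cst := lam i0 * deriv (u i0) (X i0 ω) with hcst
    have step1 : (∑ i, lam i * u i (X' i ω))
        ≤ ∑ i, (lam i * u i (X i ω) + cst * (X' i ω - X i ω)) := by
      refine Finset.sum_le_sum fun i _ => ?_
      have ht := (hu i).tangent (X i ω) (X' i ω)
      have h1 : lam i * u i (X' i ω)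
          ≤ lam i * (u i (X i ω) + deriv (u i) (X i ω) * (X' i ω - X i ω)) :=
        mul_le_mul_of_nonneg_left ht (hlam i).le
      have h2 : lam i * (u i (X i ω) + deriv (u i) (X i ω) * (X' i ω - X i ω))
          = lam i * u i (X i ω) + (lam i * deriv (u i) (X i ω)) * (X' i ω - X i ω) := by ring
      rw [h2, hfocω i] at h1
      exact h1
    have step2 : (∑ i, (lam i * u i (X i ω) + cst * (X' i ω - X i ω)))
        = ∑ i, lam i * u i (X i ω) := by
      rw [Finset.sum_add_distrib, ← Finset.mul_sum, Finset.sum_sub_distrib, hXs, hX's]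
      ring
    linarith [step1, step2.le]
  calc (∑ i, lam i * EUf P (u i) (X' i))
      = ∫ ω, (∑ i, lam i * u i (X' i ω)) ∂P := hsum X' hX'.1
    _ ≤ ∫ ω, (∑ i, lam i * u i (X i ω)) ∂P :=
        integral_mono_ae (integrable_finset_sum _ (fun i _ => hint X' hX'.1 i))
          (integrable_finset_sum _ (fun i _ => hint X hX.1 i)) hae
    _ = ∑ i, lam i * EUf P (u i) (X i) := (hsum X hX.1).symm


theorem exists_unif_bound {n : ℕ} {X : Fin n → Ω → ℝ} (hX : ∀ i, IsBddRV (X i)) :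
    ∃ C : ℝ, 0 ≤ C ∧ ∀ i ω, |X i ω| ≤ C := by
  choose c hc using fun i => (hX i).2
  refine ⟨∑ k, |c k|, Finset.sum_nonneg fun k _ => abs_nonneg _, fun i ω => ?_⟩
  exact (hc i ω).trans ((le_abs_self _).trans
    (Finset.single_le_sum (f := fun k => |c k|) (fun k _ => abs_nonneg _) (Finset.mem_univ i)))

set_option maxHeartbeats 1000000 in
theorem lemB {P : Measure Ω} [IsProbabilityMeasure P]
    {n : ℕ} {u : Fin n → ℝ → ℝ} (hu : ∀ i, IsUtility (u i))
    {Y : Ω → ℝ} {X : Fin n → Ω → ℝ} (hX : FeasSum P Y X)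
    {lam : Fin n → ℝ} (hlam : ∀ i, 0 < lam i)
    (hmax : ∀ X' : Fin n → Ω → ℝ, FeasSum P Y X' →
      (∑ i, lam i * EUf P (u i) (X' i)) ≤ ∑ i, lam i * EUf P (u i) (X i)) :
    ∀ i j, ∀ᵐ ω ∂P, lam i * deriv (u i) (X i ω) = lam j * deriv (u j) (X j ω) := by
  obtain ⟨C, hC0, hC⟩ := exists_unif_bound hX.1
  have key : ∀ i j : Fin n, i ≠ j → ∀ θ : ℝ, 0 < θ →
      P {ω | lam j * deriv (u j) (X j ω) + θ < lam i * deriv (u i) (X i ω)} = 0 := by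
    intro i j hij θ hθ
    by_contra hP0
    set A := {ω | lam j * deriv (u j) (X j ω) + θ < lam i * deriv (u i) (X i ω)} with hAdef
    have hAm : MeasurableSet A :=
      measurableSet_lt
        ((((measurable_deriv (u j)).comp (hX.1 j).1).const_mul (lam j)).add_const θ)
        (((measurable_deriv (u i)).comp (hX.1 i).1).const_mul (lam i))
    have hlampos : 0 < lam i + lam j := by linarith [hlam i, hlam j]
    set η := θ / (2 * (lam i + lam j)) with hηdef
    have hηpos : 0 < η := by positivity
    obtain ⟨ρi, hρi, hmi⟩ := (hu i).modulus (C + 1) hηpos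
    obtain ⟨ρj, hρj, hmj⟩ := (hu j).modulus (C + 1) hηpos
    set ε := min 1 (min ρi ρj) with hεdef
    have hε : 0 < ε := lt_min one_pos (lt_min hρi hρj)
    have hε1 : ε ≤ 1 := min_le_left _ _
    have hερi : ε ≤ ρi := (min_le_right _ _).trans (min_le_left _ _)
    have hερj : ε ≤ ρj := (min_le_right _ _).trans (min_le_right _ _)
    set X' : Fin n → Ω → ℝ := fun k ω =>
      X k ω + A.indicator (fun _ => if k = i then ε else if k = j then -ε else 0) ω with hX'def
    have hfeas : FeasSum P Y X' := by
      constructor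
      · intro k; exact (hX.1 k).shift1 hAm _
      · filter_upwards [hX.2] with ω hω
        have hz : (∑ k, A.indicator
            (fun _ => if k = i then ε else if k = j then -ε else (0:ℝ)) ω) = 0 := by
          by_cases hm : ω ∈ A
          · simp only [indicator_of_mem hm]
            rw [sum_two hij _ (fun k h1 h2 => by simp [h1, h2])]
            simp [hij, Ne.symm hij]
          · simp [indicator_of_notMem hm]
        calc (∑ k, X' k ω)
            = (∑ k, X k ω) + ∑ k, A.indicator
              (fun _ => if k = i then ε else if k = j then -ε else (0:ℝ)) ω := by
              rw [← Finset.sum_add_distrib]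
          _ = Y ω := by rw [hz, add_zero, hω]
    have hXi' : X' i = fun ω => X i ω + A.indicator (fun _ => ε) ω := by
      funext ω; simp [hX'def]
    have hXj' : X' j = fun ω => X j ω + A.indicator (fun _ => -ε) ω := by
      funext ω; simp [hX'def, hij.symm]
    have hother : ∀ k, k ≠ i → k ≠ j → X' k = X k := by
      intro k h1 h2; funext ω; simp [hX'def, h1, h2]
    set fi := fun ω => u i (X i ω + ε) - u i (X i ω) with hfi
    set fj := fun ω => u j (X j ω + (-ε)) - u j (X j ω) with hfj
    have hEUi : EUf P (u i) (X' i) - EUf P (u i) (X i) = ∫ ω in A, fi ω ∂P := by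
      rw [hXi']; exact EU_shift1 (P := P) (hu i) (hX.1 i) hAm ε
    have hEUj : EUf P (u j) (X' j) - EUf P (u j) (X j) = ∫ ω in A, fj ω ∂P := by
      rw [hXj']; exact EU_shift1 (P := P) (hu j) (hX.1 j) hAm (-ε)
    have hdiff : (∑ k, lam k * EUf P (u k) (X' k)) - (∑ k, lam k * EUf P (u k) (X k))
        = lam i * (∫ ω in A, fi ω ∂P) + lam j * (∫ ω in A, fj ω ∂P) := by
      rw [← hEUi, ← hEUj, ← Finset.sum_sub_distrib]
      rw [sum_two hij (fun k => lam k * EUf P (u k) (X' k) - lam k * EUf P (u k) (X k))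
        (fun k h1 h2 => by simp [hother k h1 h2])]
      ring
    have hfiInt : IntegrableOn fi A P :=
      ((integrable_compRV (hu i).cont ((hX.1 i).addConst ε)).sub
        (integrable_compRV (hu i).cont (hX.1 i))).integrableOn
    have hfjInt : IntegrableOn fj A P :=
      ((integrable_compRV (hu j).cont ((hX.1 j).addConst (-ε))).sub
        (integrable_compRV (hu j).cont (hX.1 j))).integrableOn
    have hptwise : ∀ ω ∈ A, ε * (θ/2) ≤ lam i * fi ω + lam j * fj ω := by
      intro ω hω
      rw [hAdef, mem_setOf_eq] at hω
      have b1 : |X i ω| ≤ C + 1 := (hC i ω).trans (by linarith)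
      have b2 : |X i ω + ε| ≤ C + 1 := by
        have := hC i ω; rw [abs_le] at this ⊢; constructor <;> linarith [this.1, this.2]
      have b3 : |X j ω| ≤ C + 1 := (hC j ω).trans (by linarith)
      have b4 : |X j ω + (-ε)| ≤ C + 1 := by
        have := hC j ω; rw [abs_le] at this ⊢; constructor <;> linarith [this.1, this.2]
      have m1 : |deriv (u i) (X i ω + ε) - deriv (u i) (X i ω)| ≤ η := by
        refine hmi _ _ b2 b1 ?_
        rw [show X i ω + ε - X i ω = ε by ring, abs_of_pos hε]; exact hερi
      have m2 : |deriv (u j) (X j ω + (-ε)) - deriv (u j) (X j ω)| ≤ η := by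
        refine hmj _ _ b4 b3 ?_
        rw [show X j ω + (-ε) - X j ω = -ε by ring, abs_neg, abs_of_pos hε]; exact hερj
      have g1 := (hu i).gain_ge (X i ω) ε
      have g2 := (hu j).gain_ge (X j ω) (-ε)
      have a1 := abs_le.1 m1
      have a2 := abs_le.1 m2
      have e1 : lam i * (ε * deriv (u i) (X i ω + ε)) ≤ lam i * fi ω :=
        mul_le_mul_of_nonneg_left g1 (hlam i).le
      have e2 : lam j * ((-ε) * deriv (u j) (X j ω + (-ε))) ≤ lam j * fj ω :=
        mul_le_mul_of_nonneg_left g2 (hlam j).le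
      have e3 : ε * (deriv (u i) (X i ω) - η) ≤ ε * deriv (u i) (X i ω + ε) :=
        mul_le_mul_of_nonneg_left (by linarith [a1.1]) hε.le
      have e4 : (-ε) * (deriv (u j) (X j ω) + η) ≤ (-ε) * deriv (u j) (X j ω + (-ε)) := by
        nlinarith [hε, a2.2]
      have e5 : lam i * (ε * (deriv (u i) (X i ω) - η))
          ≤ lam i * (ε * deriv (u i) (X i ω + ε)) :=
        mul_le_mul_of_nonneg_left e3 (hlam i).le
      have e6 : lam j * ((-ε) * (deriv (u j) (X j ω) + η))
          ≤ lam j * ((-ε) * deriv (u j) (X j ω + (-ε))) :=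
        mul_le_mul_of_nonneg_left e4 (hlam j).le
      have hηeq : (lam i + lam j) * η = θ / 2 := by
        rw [hηdef]; field_simp
      have hprod : ε * (lam j * deriv (u j) (X j ω) + θ) ≤ ε * (lam i * deriv (u i) (X i ω)) :=
        mul_le_mul_of_nonneg_left hω.le hε.le
      nlinarith [e1, e2, e5, e6, hηeq, hprod, hε, hlam i, hlam j]
    have hIlow : (P A).toReal * (ε * (θ/2)) ≤ ∫ ω in A, (lam i * fi ω + lam j * fj ω) ∂P := by
      have h0 := setIntegral_mono_on (integrableOn_const (measure_ne_top P A))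
        ((hfiInt.const_mul (lam i)).add (hfjInt.const_mul (lam j))) hAm hptwise
      rw [setIntegral_const, measureReal_def, smul_eq_mul] at h0
      simpa only [Pi.add_apply] using h0
    have hIsplit : (∫ ω in A, (lam i * fi ω + lam j * fj ω) ∂P)
        = lam i * (∫ ω in A, fi ω ∂P) + lam j * (∫ ω in A, fj ω ∂P) := by
      rw [integral_add (hfiInt.const_mul (lam i)) (hfjInt.const_mul (lam j)),
        integral_const_mul, integral_const_mul]
    have hPA : 0 < (P A).toReal := ENNReal.toReal_pos hP0 (measure_ne_top P A)
    have hcontr := hmax X' hfeas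
    have hpos : 0 < (P A).toReal * (ε * (θ/2)) := mul_pos hPA (by positivity)
    linarith [hdiff, hIlow, hIsplit, hpos, hcontr]
  intro i j
  by_cases hij : i = j
  · subst hij; exact Filter.Eventually.of_forall fun ω => rfl
  · have hone : ∀ i' j' : Fin n, i' ≠ j' →
        ∀ᵐ ω ∂P, lam i' * deriv (u i') (X i' ω) ≤ lam j' * deriv (u j') (X j' ω) := by
      intro i' j' hij'
      rw [ae_iff]
      have hsub : {ω | ¬ lam i' * deriv (u i') (X i' ω) ≤ lam j' * deriv (u j') (X j' ω)}
          ⊆ ⋃ k : ℕ, {ω | lam j' * deriv (u j') (X j' ω) + 1/(k+1)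
              < lam i' * deriv (u i') (X i' ω)} := by
        intro ω hω
        rw [mem_setOf_eq, not_le, ← sub_pos] at hω
        obtain ⟨k, hk⟩ := exists_nat_one_div_lt hω
        refine mem_iUnion.2 ⟨k, ?_⟩
        rw [mem_setOf_eq]
        push_cast at hk ⊢
        linarith [hk]
      refine measure_mono_null hsub (measure_iUnion_null fun k => key i' j' hij' _ ?_)
      positivity
    filter_upwards [hone i j hij, hone j i (fun h => hij h.symm)] with ω h1 h2
    exact le_antisymm h1 h2


set_option maxHeartbeats 1000000 in
theorem trade {P : Measure Ω} [IsProbabilityMeasure P] {u0 uj : ℝ → ℝ}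
    (hu0 : IsUtility u0) (huj : IsUtility uj)
    {X0 Xj : Ω → ℝ} (hX0 : IsBddRV X0) (hXj : IsBddRV Xj)
    {a b : ℝ} (hab : a < b) (ha : 0 < a)
    (hA0 : P {ω | deriv u0 (X0 ω) < a * deriv uj (Xj ω)} ≠ 0)
    (hB0 : P {ω | b * deriv uj (Xj ω) < deriv u0 (X0 ω)} ≠ 0) :
    ∃ Z0 Zj : Ω → ℝ, IsBddRV Z0 ∧ IsBddRV Zj ∧
      (∀ ω, Z0 ω + Zj ω = X0 ω + Xj ω) ∧
      EUf P u0 X0 < EUf P u0 Z0 ∧ EUf P uj Xj < EUf P uj Zj := by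
  obtain ⟨C0, hC0⟩ := hX0.2
  obtain ⟨Cj, hCj⟩ := hXj.2
  set C := |C0| + |Cj| with hCdef
  have hC0' : ∀ ω, |X0 ω| ≤ C := fun ω =>
    (hC0 ω).trans (by rw [hCdef]; have := abs_nonneg Cj; linarith [le_abs_self C0])
  have hCj' : ∀ ω, |Xj ω| ≤ C := fun ω =>
    (hCj ω).trans (by rw [hCdef]; have := abs_nonneg C0; linarith [le_abs_self Cj])
  have hCnn : 0 ≤ C := by rw [hCdef]; positivity
  set A := {ω | deriv u0 (X0 ω) < a * deriv uj (Xj ω)} with hAdef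
  set B := {ω | b * deriv uj (Xj ω) < deriv u0 (X0 ω)} with hBdef
  have hAm : MeasurableSet A := measurableSet_lt ((measurable_deriv u0).comp hX0.1)
    (((measurable_deriv uj).comp hXj.1).const_mul a)
  have hBm : MeasurableSet B := measurableSet_lt
    (((measurable_deriv uj).comp hXj.1).const_mul b) ((measurable_deriv u0).comp hX0.1)
  have hABd : Disjoint A B := by
    rw [disjoint_left]
    intro ω hωA hωB
    rw [hAdef, mem_setOf_eq] at hωA
    rw [hBdef, mem_setOf_eq] at hωB
    have hdj := huj.deriv_pos (Xj ω)
    have h3 : a * deriv uj (Xj ω) < b * deriv uj (Xj ω) := mul_lt_mul_of_pos_right hab hdj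
    linarith
  obtain ⟨m, hm, hmlb⟩ := huj.derivBound (C + 1) (by linarith)
  set PA := (P A).toReal with hPAdef
  set PB := (P B).toReal with hPBdef
  have hPA : 0 < PA := ENNReal.toReal_pos hA0 (measure_ne_top P A)
  have hPB : 0 < PB := ENNReal.toReal_pos hB0 (measure_ne_top P B)
  have hPA1 : PA ≤ 1 := by
    rw [hPAdef]
    simpa using ENNReal.toReal_mono (by simp) (prob_le_one (μ := P) (s := A))
  have hPB1 : PB ≤ 1 := by
    rw [hPBdef]
    simpa using ENNReal.toReal_mono (by simp) (prob_le_one (μ := P) (s := B))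
  set gj := fun ω => deriv uj (Xj ω) with hgj
  have hgjInt : Integrable gj P := integrable_compRV huj.contDeriv hXj
  set α := ∫ ω in A, gj ω ∂P with hα
  set β := ∫ ω in B, gj ω ∂P with hβ
  have hgjlb : ∀ ω, m ≤ gj ω := fun ω => hmlb _ ((hCj' ω).trans (by linarith))
  have hαlb : PA * m ≤ α := by
    have h0 := setIntegral_mono_on (integrableOn_const (measure_ne_top P A))
      hgjInt.integrableOn hAm (fun ω _ => hgjlb ω)
    rwa [setIntegral_const, measureReal_def, smul_eq_mul] at h0
  have hβlb : PB * m ≤ β := by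
    have h0 := setIntegral_mono_on (integrableOn_const (measure_ne_top P B))
      hgjInt.integrableOn hBm (fun ω _ => hgjlb ω)
    rwa [setIntegral_const, measureReal_def, smul_eq_mul] at h0
  have hαpos : 0 < α := lt_of_lt_of_le (mul_pos hPA hm) hαlb
  have hβpos : 0 < β := lt_of_lt_of_le (mul_pos hPB hm) hβlb
  set s := (a + b) / (2 * a) with hs
  have hs1 : 1 < s := by rw [hs, lt_div_iff₀ (by linarith)]; linarith
  have hs2 : s * a = (a + b) / 2 := by rw [hs]; field_simp
  set t := s * β / α with ht
  have htpos : 0 < t := by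
    rw [ht]; have h01 : (0:ℝ) < s := by linarith
    positivity
  have htα : t * α = s * β := by rw [ht]; field_simp
  set M1 := β * (b - a) / 2 with hM1
  set M2 := β * (s - 1) with hM2
  have hM1pos : 0 < M1 := by
    rw [hM1]
    have hba : 0 < b - a := by linarith
    positivity
  have hM2pos : 0 < M2 := mul_pos hβpos (by linarith)
  set η := min M1 M2 / (2 * (t + 1)) with hη
  have hηpos : 0 < η := div_pos (lt_min hM1pos hM2pos) (by linarith)
  have hηeq : η * (1 + t) = min M1 M2 / 2 := by
    rw [hη]; field_simp; ring
  have hηbound : η * (t * PA + PB) ≤ min M1 M2 / 2 := by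
    rw [← hηeq]
    refine mul_le_mul_of_nonneg_left ?_ hηpos.le
    have h1 : t * PA ≤ t * 1 := mul_le_mul_of_nonneg_left hPA1 htpos.le
    linarith
  obtain ⟨ρ0, hρ0, hm0⟩ := hu0.modulus (C + 1) hηpos
  obtain ⟨ρj', hρj, hmj⟩ := huj.modulus (C + 1) hηpos
  set ε := min (min 1 (1/t)) (min (min ρ0 ρj') (min (ρ0/t) (ρj'/t))) with hε'
  have hε : 0 < ε := by
    refine lt_min (lt_min one_pos (by positivity)) (lt_min (lt_min hρ0 hρj) (lt_min ?_ ?_)) <;>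
      positivity
  have hε1 : ε ≤ 1 := (min_le_left _ _).trans (min_le_left _ _)
  have hερ0 : ε ≤ ρ0 := (min_le_right _ _).trans ((min_le_left _ _).trans (min_le_left _ _))
  have hερj : ε ≤ ρj' := (min_le_right _ _).trans ((min_le_left _ _).trans (min_le_right _ _))
  set δ := t * ε with hδ
  have hδpos : 0 < δ := mul_pos htpos hε
  have hδ1 : δ ≤ 1 := by
    have h1 : ε ≤ 1/t := (min_le_left _ _).trans (min_le_right _ _)
    rw [hδ]
    calc t * ε ≤ t * (1/t) := mul_le_mul_of_nonneg_left h1 htpos.le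
      _ = 1 := by field_simp
  have hδρ0 : δ ≤ ρ0 := by
    have h1 : ε ≤ ρ0/t := (min_le_right _ _).trans ((min_le_right _ _).trans (min_le_left _ _))
    rw [hδ]
    calc t * ε ≤ t * (ρ0/t) := mul_le_mul_of_nonneg_left h1 htpos.le
      _ = ρ0 := by field_simp
  have hδρj : δ ≤ ρj' := by
    have h1 : ε ≤ ρj'/t := (min_le_right _ _).trans ((min_le_right _ _).trans (min_le_right _ _))
    rw [hδ]
    calc t * ε ≤ t * (ρj'/t) := mul_le_mul_of_nonneg_left h1 htpos.le
      _ = ρj' := by field_simp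
  set Z0 := fun ω => X0 ω + A.indicator (fun _ => -δ) ω + B.indicator (fun _ => ε) ω with hZ0
  set Zj := fun ω => Xj ω + A.indicator (fun _ => δ) ω + B.indicator (fun _ => -ε) ω with hZj
  refine ⟨Z0, Zj, hX0.shift2 hAm hBm _ _, hXj.shift2 hAm hBm _ _, ?_, ?_, ?_⟩
  · intro ω
    by_cases h1 : ω ∈ A <;> by_cases h2 : ω ∈ B <;>
      simp [hZ0, hZj, indicator_of_mem, indicator_of_notMem, h1, h2] <;> ring
  · -- agent 0 strictly gains
    have hsh := EU_shift2 (P := P) hu0 hX0 hAm hBm hABd (-δ) ε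
    have hIA : IntegrableOn (fun ω => u0 (X0 ω + -δ) - u0 (X0 ω)) A P :=
      ((integrable_compRV hu0.cont (hX0.addConst (-δ))).sub
        (integrable_compRV hu0.cont hX0)).integrableOn
    have hIB : IntegrableOn (fun ω => u0 (X0 ω + ε) - u0 (X0 ω)) B P :=
      ((integrable_compRV hu0.cont (hX0.addConst ε)).sub
        (integrable_compRV hu0.cont hX0)).integrableOn
    have hlow1 : (∫ ω in A, (-δ * (a * gj ω + η)) ∂P)
        ≤ ∫ ω in A, (u0 (X0 ω + -δ) - u0 (X0 ω)) ∂P := by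
      refine setIntegral_mono_on
        (((hgjInt.integrableOn.const_mul a).add
          (integrableOn_const (measure_ne_top P A))).const_mul (-δ)) hIA hAm ?_
      intro ω hω
      rw [hAdef, mem_setOf_eq] at hω
      have hg := hu0.gain_ge (X0 ω) (-δ)
      have hmod : |deriv u0 (X0 ω + -δ) - deriv u0 (X0 ω)| ≤ η := by
        refine hm0 _ _ ?_ ((hC0' ω).trans (by linarith)) ?_
        · have := hC0' ω; rw [abs_le] at this ⊢
          constructor <;> linarith [this.1, this.2]
        · rw [show X0 ω + -δ - X0 ω = -δ by ring, abs_neg, abs_of_pos hδpos]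
          exact hδρ0
      have hmod' := abs_le.1 hmod
      have s1 : -δ * (a * gj ω + η) ≤ -δ * (deriv u0 (X0 ω) + η) :=
        mul_le_mul_of_nonpos_left (by linarith) (by linarith)
      have s2 : -δ * (deriv u0 (X0 ω) + η) ≤ -δ * deriv u0 (X0 ω + -δ) :=
        mul_le_mul_of_nonpos_left (by linarith [hmod'.2]) (by linarith)
      linarith [hg]
    have hlow2 : (∫ ω in B, (ε * (b * gj ω - η)) ∂P)
        ≤ ∫ ω in B, (u0 (X0 ω + ε) - u0 (X0 ω)) ∂P := by
      refine setIntegral_mono_on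
        (((hgjInt.integrableOn.const_mul b).sub
          (integrableOn_const (measure_ne_top P B))).const_mul ε) hIB hBm ?_
      intro ω hω
      rw [hBdef, mem_setOf_eq] at hω
      have hg := hu0.gain_ge (X0 ω) ε
      have hmod : |deriv u0 (X0 ω + ε) - deriv u0 (X0 ω)| ≤ η := by
        refine hm0 _ _ ?_ ((hC0' ω).trans (by linarith)) ?_
        · have := hC0' ω; rw [abs_le] at this ⊢
          constructor <;> linarith [this.1, this.2]
        · rw [show X0 ω + ε - X0 ω = ε by ring, abs_of_pos hε]
          exact hερ0
      have hmod' := abs_le.1 hmod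
      have s1 : ε * (b * gj ω - η) ≤ ε * (deriv u0 (X0 ω) - η) :=
        mul_le_mul_of_nonneg_left (by linarith) hε.le
      have s2 : ε * (deriv u0 (X0 ω) - η) ≤ ε * deriv u0 (X0 ω + ε) :=
        mul_le_mul_of_nonneg_left (by linarith [hmod'.1]) hε.le
      linarith [hg]
    have hval1 : (∫ ω in A, (-δ * (a * gj ω + η)) ∂P) = -δ * (a * α + PA * η) := by
      rw [integral_const_mul]
      congr 1
      rw [integral_add (hgjInt.integrableOn.const_mul a)
        (integrableOn_const (measure_ne_top P A)),
        integral_const_mul, setIntegral_const, measureReal_def, smul_eq_mul]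
    have hval2 : (∫ ω in B, (ε * (b * gj ω - η)) ∂P) = ε * (b * β - PB * η) := by
      rw [integral_const_mul]
      congr 1
      rw [integral_sub (hgjInt.integrableOn.const_mul b)
        (integrableOn_const (measure_ne_top P B)),
        integral_const_mul, setIntegral_const, measureReal_def, smul_eq_mul]
    have he : t * (a * α) = (a + b) / 2 * β := by
      calc t * (a * α) = a * (t * α) := by ring
        _ = a * (s * β) := by rw [htα]
        _ = s * a * β := by ring
        _ = (a + b) / 2 * β := by rw [hs2]
    have hkey : -δ * (a * α + PA * η) + ε * (b * β - PB * η)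
        = ε * (M1 - η * (t * PA + PB)) := by
      rw [hδ, hM1]
      linear_combination (-ε) * he
    have hfin : 0 < -δ * (a * α + PA * η) + ε * (b * β - PB * η) := by
      rw [hkey]
      refine mul_pos hε ?_
      have h1 := min_le_left M1 M2
      linarith [hηbound]
    have : 0 < EUf P u0 Z0 - EUf P u0 X0 := by
      rw [hZ0, hsh]
      linarith [hlow1, hlow2, hval1.symm.le, hval2.symm.le, hfin]
    linarith
  · -- agent j strictly gains
    have hsh := EU_shift2 (P := P) huj hXj hAm hBm hABd δ (-ε)
    have hIA : IntegrableOn (fun ω => uj (Xj ω + δ) - uj (Xj ω)) A P :=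
      ((integrable_compRV huj.cont (hXj.addConst δ)).sub
        (integrable_compRV huj.cont hXj)).integrableOn
    have hIB : IntegrableOn (fun ω => uj (Xj ω + -ε) - uj (Xj ω)) B P :=
      ((integrable_compRV huj.cont (hXj.addConst (-ε))).sub
        (integrable_compRV huj.cont hXj)).integrableOn
    have hlow1 : (∫ ω in A, (δ * (gj ω - η)) ∂P)
        ≤ ∫ ω in A, (uj (Xj ω + δ) - uj (Xj ω)) ∂P := by
      refine setIntegral_mono_on
        ((hgjInt.integrableOn.sub
          (integrableOn_const (measure_ne_top P A))).const_mul δ) hIA hAm ?_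
      intro ω hω
      have hg := huj.gain_ge (Xj ω) δ
      have hmod : |deriv uj (Xj ω + δ) - deriv uj (Xj ω)| ≤ η := by
        refine hmj _ _ ?_ ((hCj' ω).trans (by linarith)) ?_
        · have := hCj' ω; rw [abs_le] at this ⊢
          constructor <;> linarith [this.1, this.2]
        · rw [show Xj ω + δ - Xj ω = δ by ring, abs_of_pos hδpos]
          exact hδρj
      have hmod' := abs_le.1 hmod
      have s1 : δ * (gj ω - η) ≤ δ * deriv uj (Xj ω + δ) :=
        mul_le_mul_of_nonneg_left (by linarith [hmod'.1]) hδpos.le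
      linarith [hg]
    have hlow2 : (∫ ω in B, (-ε * (gj ω + η)) ∂P)
        ≤ ∫ ω in B, (uj (Xj ω + -ε) - uj (Xj ω)) ∂P := by
      refine setIntegral_mono_on
        ((hgjInt.integrableOn.add
          (integrableOn_const (measure_ne_top P B))).const_mul (-ε)) hIB hBm ?_
      intro ω hω
      have hg := huj.gain_ge (Xj ω) (-ε)
      have hmod : |deriv uj (Xj ω + -ε) - deriv uj (Xj ω)| ≤ η := by
        refine hmj _ _ ?_ ((hCj' ω).trans (by linarith)) ?_
        · have := hCj' ω; rw [abs_le] at this ⊢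
          constructor <;> linarith [this.1, this.2]
        · rw [show Xj ω + -ε - Xj ω = -ε by ring, abs_neg, abs_of_pos hε]
          exact hερj
      have hmod' := abs_le.1 hmod
      have s1 : -ε * (gj ω + η) ≤ -ε * deriv uj (Xj ω + -ε) :=
        mul_le_mul_of_nonpos_left (by linarith [hmod'.2]) (by linarith)
      linarith [hg]
    have hval1 : (∫ ω in A, (δ * (gj ω - η)) ∂P) = δ * (α - PA * η) := by
      rw [integral_const_mul]
      congr 1
      rw [integral_sub hgjInt.integrableOn
        (integrableOn_const (measure_ne_top P A)),
        setIntegral_const, measureReal_def, smul_eq_mul]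
    have hval2 : (∫ ω in B, (-ε * (gj ω + η)) ∂P) = -ε * (β + PB * η) := by
      rw [integral_const_mul]
      congr 1
      rw [integral_add hgjInt.integrableOn
        (integrableOn_const (measure_ne_top P B)),
        setIntegral_const, measureReal_def, smul_eq_mul]
    have hkey : δ * (α - PA * η) + -ε * (β + PB * η)
        = ε * (M2 - η * (t * PA + PB)) := by
      rw [hδ, hM2]
      linear_combination ε * htα
    have hfin : 0 < δ * (α - PA * η) + -ε * (β + PB * η) := by
      rw [hkey]
      refine mul_pos hε ?_
      have h1 := min_le_right M1 M2
      linarith [hηbound]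
    have : 0 < EUf P uj Zj - EUf P uj Xj := by
      rw [hZj, hsh]
      linarith [hlow1, hlow2, hval1.symm.le, hval2.symm.le, hfin]
    linarith


set_option maxHeartbeats 1000000 in
theorem lemC {P : Measure Ω} [IsProbabilityMeasure P]
    {n : ℕ} (hn : 1 ≤ n) {u : Fin n → ℝ → ℝ} (hu : ∀ i, IsUtility (u i))
    {Y : Ω → ℝ} {X : Fin n → Ω → ℝ} (hX : FeasSum P Y X)
    (hpar : ¬ ∃ X' : Fin n → Ω → ℝ, FeasSum P Y X' ∧
        (∀ i, EUf P (u i) (X i) ≤ EUf P (u i) (X' i)) ∧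
        ∃ i, EUf P (u i) (X i) < EUf P (u i) (X' i)) :
    ∃ lam : Fin n → ℝ, (∀ i, 0 < lam i) ∧
      ∀ i j, ∀ᵐ ω ∂P, lam i * deriv (u i) (X i ω) = lam j * deriv (u j) (X j ω) := by
  set i0 : Fin n := ⟨0, hn⟩ with hi0
  have hconst : ∀ i : Fin n, ∃ c : ℝ, 0 < c ∧
      ∀ᵐ ω ∂P, deriv (u i0) (X i0 ω) = c * deriv (u i) (X i ω) := by
    intro i
    by_cases hii : i = i0
    · subst hii; exact ⟨1, one_pos, Filter.Eventually.of_forall fun ω => (one_mul _).symm⟩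
    set R := fun ω => deriv (u i0) (X i0 ω) / deriv (u i) (X i ω) with hR
    obtain ⟨C, hC0, hC⟩ := exists_unif_bound hX.1
    obtain ⟨D0, hD0⟩ := (isCompact_Icc (a := -C) (b := C)).exists_bound_of_continuousOn
      ((hu i0).contDeriv.continuousOn)
    obtain ⟨mi, hmi, hmilb⟩ := (hu i).derivBound C hC0
    have hRpos : ∀ ω, 0 < R ω := fun ω =>
      div_pos ((hu i0).deriv_pos _) ((hu i).deriv_pos _)
    have hRbdd : ∀ ω, R ω ∈ Icc 0 (D0 / mi) := by
      intro ω
      have h1 : deriv (u i0) (X i0 ω) ≤ D0 := by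
        have := hD0 (X i0 ω) (mem_Icc.2 (abs_le.1 (hC i0 ω)))
        rw [Real.norm_eq_abs] at this
        linarith [le_abs_self (deriv (u i0) (X i0 ω))]
      have h2 : mi ≤ deriv (u i) (X i ω) := hmilb _ (hC i ω)
      have hD0nn : 0 ≤ D0 := le_trans ((hu i0).deriv_pos (X i0 ω)).le h1
      exact mem_Icc.2 ⟨(hRpos ω).le, div_le_div₀ hD0nn h1 hmi h2⟩
    by_cases hlev : ∀ a b : ℝ, a < b → P {ω | R ω < a} = 0 ∨ P {ω | b < R ω} = 0
    · obtain ⟨c, hc⟩ := ae_const_of_levels _ _ hRbdd hlev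
      have h2 : P {ω | R ω = c} ≠ 0 := by
        intro h0
        have hcompl := ae_iff.1 hc
        have hle : P univ ≤ P ({ω | R ω = c} ∪ {ω | ¬ R ω = c}) :=
          measure_mono (fun ω _ => by by_cases h : R ω = c; exacts [Or.inl h, Or.inr h])
        have := hle.trans (measure_union_le _ _)
        rw [h0, hcompl, measure_univ] at this
        simp at this
      have hcpos : 0 < c := by
        obtain ⟨ω0, hω0⟩ := nonempty_of_measure_ne_zero h2
        rw [mem_setOf_eq] at hω0
        rw [← hω0]; exact hRpos ω0
      refine ⟨c, hcpos, ?_⟩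
      filter_upwards [hc] with ω hω
      have hdi := ((hu i).deriv_pos (X i ω)).ne'
      rw [hR] at hω
      rwa [div_eq_iff hdi] at hω
    · push_neg at hlev
      obtain ⟨a, b, hab, hA0, hB0⟩ := hlev
      have ha : 0 < a := by
        by_contra h
        push_neg at h
        apply hA0
        have he : {ω | R ω < a} = ∅ := by
          ext ω; simp only [mem_setOf_eq, mem_empty_iff_false, iff_false, not_lt]
          linarith [hRpos ω]
        simp [he]
      have hAset : {ω | R ω < a} = {ω | deriv (u i0) (X i0 ω) < a * deriv (u i) (X i ω)} := by
        ext ω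
        rw [mem_setOf_eq, mem_setOf_eq, hR, div_lt_iff₀ ((hu i).deriv_pos _)]
      have hBset : {ω | b < R ω} = {ω | b * deriv (u i) (X i ω) < deriv (u i0) (X i0 ω)} := by
        ext ω
        rw [mem_setOf_eq, mem_setOf_eq, hR, lt_div_iff₀ ((hu i).deriv_pos _)]
      rw [hAset] at hA0
      rw [hBset] at hB0
      obtain ⟨Z0, Zj, hZ0b, hZjb, hZsum, hZ0gain, hZjgain⟩ :=
        trade (hu i0) (hu i) (hX.1 i0) (hX.1 i) hab ha hA0 hB0
      exfalso
      apply hpar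
      set X' : Fin n → Ω → ℝ := fun k => if k = i0 then Z0 else if k = i then Zj else X k
        with hX'
      have hX'i0 : X' i0 = Z0 := by simp [hX']
      have hX'i : X' i = Zj := by simp [hX', hii]
      have hX'other : ∀ k, k ≠ i0 → k ≠ i → X' k = X k := fun k h1 h2 => by
        simp [hX', h1, h2]
      refine ⟨X', ⟨?_, ?_⟩, ?_, ⟨i0, ?_⟩⟩
      · intro k
        by_cases h1 : k = i0
        · subst h1; rw [hX'i0]; exact hZ0b
        · by_cases h2 : k = i
          · subst h2; rw [hX'i]; exact hZjb
          · rw [hX'other k h1 h2]; exact hX.1 k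
      · filter_upwards [hX.2] with ω hω
        have hz : ∑ k, (X' k ω - X k ω) = (X' i0 ω - X i0 ω) + (X' i ω - X i ω) :=
          sum_two (show i0 ≠ i from fun h => hii h.symm) (fun k => X' k ω - X k ω)
            (fun k h1 h2 => by simp [hX'other k h1 h2])
        have hz2 : (X' i0 ω - X i0 ω) + (X' i ω - X i ω) = 0 := by
          rw [hX'i0, hX'i]
          have := hZsum ω; linarith
        have hsame : ∑ k, X' k ω = ∑ k, X k ω := by
          have hsplit : ∑ k, X' k ω = ∑ k, (X k ω + (X' k ω - X k ω)) :=
            Finset.sum_congr rfl fun k _ => by ring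
          rw [hsplit, Finset.sum_add_distrib, hz, hz2, add_zero]
        rw [hsame, hω]
      · intro k
        by_cases h1 : k = i0
        · subst h1; rw [hX'i0]; exact hZ0gain.le
        · by_cases h2 : k = i
          · subst h2; rw [hX'i]; exact hZjgain.le
          · rw [hX'other k h1 h2]
      · rw [hX'i0]; exact hZ0gain
  choose c hcpos hc using hconst
  refine ⟨c, hcpos, fun i j => ?_⟩
  filter_upwards [hc i, hc j] with ω h1 h2
  rw [← h1, ← h2]

end Helpers

/-- For EU agents `i = 2,…,n` (here indexed by `Fin n`, `n ≥ 1`) and a bounded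
random variable `Y`:
(1) a feasible vector is `Y`-Pareto optimal iff it maximizes a strictly positively weighted
sum of expected utilities among feasible vectors;
(2) for a given strictly positive weight vector, it maximizes the weighted sum iff
`λ_i u_i′(X_i) = λ_j u_j′(X_j)` a.s. for all `i, j`. -/
theorem statement1
    {Ω : Type*} [MeasurableSpace Ω] (P : Measure Ω) [IsProbabilityMeasure P]
    (hP : NonatomicM P)
    (n : ℕ) (hn : 1 ≤ n)
    (u : Fin n → ℝ → ℝ) (hu : ∀ i, IsUtility (u i))
    (Y : Ω → ℝ) (hY : IsBddRV Y)
    (X : Fin n → Ω → ℝ) (hX : FeasSum P Y X) :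
    ((¬ ∃ X' : Fin n → Ω → ℝ, FeasSum P Y X' ∧
        (∀ i, EUf P (u i) (X i) ≤ EUf P (u i) (X' i)) ∧
        ∃ i, EUf P (u i) (X i) < EUf P (u i) (X' i))
      ↔ ∃ lam : Fin n → ℝ, (∀ i, 0 < lam i) ∧
          ∀ X' : Fin n → Ω → ℝ, FeasSum P Y X' →
            (∑ i, lam i * EUf P (u i) (X' i)) ≤ ∑ i, lam i * EUf P (u i) (X i))
    ∧
    (∀ lam : Fin n → ℝ, (∀ i, 0 < lam i) →
      ((∀ X' : Fin n → Ω → ℝ, FeasSum P Y X' →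
          (∑ i, lam i * EUf P (u i) (X' i)) ≤ ∑ i, lam i * EUf P (u i) (X i))
        ↔ ∀ i j : Fin n, ∀ᵐ ω ∂P,
            lam i * deriv (u i) (X i ω) = lam j * deriv (u j) (X j ω))) := by
  constructor
  · constructor
    · intro hpar
      obtain ⟨lam, hlam, hfoc⟩ := lemC hn hu hX hpar
      exact ⟨lam, hlam, lemA hn hu hX hlam hfoc⟩
    · rintro ⟨lam, hlam, hmax⟩ ⟨X', hX', hge, ⟨i, hi⟩⟩
      have hmx := hmax X' hX'
      have hlt : (∑ k, lam k * EUf P (u k) (X k)) < ∑ k, lam k * EUf P (u k) (X' k) :=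
        Finset.sum_lt_sum (fun k _ => mul_le_mul_of_nonneg_left (hge k) (hlam k).le)
          ⟨i, Finset.mem_univ i, mul_lt_mul_of_pos_left hi (hlam i)⟩
      linarith
  · intro lam hlam
    exact ⟨fun hmax => lemB hu hX hlam hmax, fun hfoc => lemA hn hu hX hlam hfoc⟩


end
end

section
/- Fix a bounded random variable X on a nonatomic probability space, w ∈ ℝ, weights λ_i > 0 for i = 2,…,n, and let U be uniformly distributed on (0,1) with w − X = F_{w−X}⁻¹(U) a.s. Then a tuple (f₂*,…,fₙ*) of quantile functions with Σ_{i=2}^n f_i* = F_{w−X}⁻¹ maximizes ∫₀¹ Σ_{i=2}^n λ_i u_i(f_i(t)) dt over all tuples (f₂,…,fₙ) of quantile functions with Σ_{i=2}^n f_i = F_{w−X}⁻¹ if and only if (f₂*(U),…,fₙ*(U)) maximizes Σ_{i=2}^n λ_i E_P[u_i(X_i)] over all comonotonic vectors (X₂,…,Xₙ) of bounded random variables with Σ_{i=2}^n X_i = w − X a.s. -/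
open MeasureTheory Set

noncomputable section Helpers

open MeasureTheory Set

variable {Ω : Type*} [MeasurableSpace Ω]

variable {P : Measure Ω} [IsProbabilityMeasure P] {Y : Ω → ℝ} {C : ℝ}

lemma cdfR_mono : Monotone (cdfR P Y) := fun a b hab =>
  ENNReal.toReal_mono (measure_ne_top _ _) (measure_mono fun ω h => le_trans h hab)

lemma cdfR_nonneg (x : ℝ) : 0 ≤ cdfR P Y x := ENNReal.toReal_nonneg

lemma cdfR_le_one (x : ℝ) : cdfR P Y x ≤ 1 := by
  have h : (P {ω | Y ω ≤ x}).toReal ≤ (1 : ENNReal).toReal :=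
    ENNReal.toReal_mono ENNReal.one_ne_top prob_le_one
  simpa [cdfR] using h

lemma ofReal_cdfR (x : ℝ) : ENNReal.ofReal (cdfR P Y x) = P {ω | Y ω ≤ x} :=
  ENNReal.ofReal_toReal (measure_ne_top _ _)

lemma cdfR_top (hb : ∀ ω, |Y ω| ≤ C) : cdfR P Y C = 1 := by
  have h : {ω | Y ω ≤ C} = univ := eq_univ_of_forall fun ω => (abs_le.1 (hb ω)).2
  simp [cdfR, h]

lemma cdfR_bot (hb : ∀ ω, |Y ω| ≤ C) {x : ℝ} (hx : x < -C) : cdfR P Y x = 0 := by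
  have h : {ω | Y ω ≤ x} = ∅ := by
    ext ω; simp only [mem_setOf_eq, mem_empty_iff_false, iff_false, not_le]
    exact lt_of_lt_of_le hx (neg_le_of_abs_le (hb ω))
  simp [cdfR, h]

/-- right continuity of the cdf, in the form needed -/
lemma cdfR_right (hY : Measurable Y) {t c : ℝ}
    (h : ∀ ε > (0:ℝ), t ≤ cdfR P Y (c + ε)) : t ≤ cdfR P Y c := by
  have key : {ω | Y ω ≤ c} = ⋂ n : ℕ, {ω | Y ω ≤ c + 1/(n+1)} := by
    ext ω
    simp only [mem_iInter, mem_setOf_eq]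
    constructor
    · intro h0 n
      have : (0:ℝ) < 1/(n+1) := by positivity
      linarith
    · intro h2
      by_contra hlt
      push_neg at hlt
      obtain ⟨n, hn⟩ := exists_nat_one_div_lt (by linarith : (0:ℝ) < Y ω - c)
      exact absurd (h2 n) (by push_neg; linarith)
  have hmono : Antitone (fun n : ℕ => {ω | Y ω ≤ c + 1/(n+1)}) := by
    intro n m hnm ω hω
    have h1 : (1:ℝ)/(m+1) ≤ 1/(n+1) := by
      apply one_div_le_one_div_of_le (by positivity)
      have : (n:ℝ) ≤ m := Nat.cast_le.2 hnm
      linarith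
    simp only [mem_setOf_eq] at hω ⊢
    linarith
  have hiInf : P {ω | Y ω ≤ c} = ⨅ n : ℕ, P {ω | Y ω ≤ c + 1/(n+1)} := by
    rw [key]
    exact Antitone.measure_iInter hmono
      (fun n => (hY measurableSet_Iic).nullMeasurableSet) ⟨0, measure_ne_top _ _⟩
  by_cases ht : t ≤ 0
  · exact le_trans ht (cdfR_nonneg c)
  push_neg at ht
  have h1 : ENNReal.ofReal t ≤ P {ω | Y ω ≤ c} := by
    rw [hiInf]
    refine le_iInf fun n => ?_
    have := h (1/(n+1)) (by positivity)
    calc ENNReal.ofReal t ≤ ENNReal.ofReal (cdfR P Y (c + 1/(n+1))) := ENNReal.ofReal_le_ofReal this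
      _ = P {ω | Y ω ≤ c + 1/(n+1)} := ofReal_cdfR _
  have := ENNReal.toReal_mono (measure_ne_top _ _) h1
  rwa [ENNReal.toReal_ofReal ht.le] at this

lemma quant_set_nonempty (hb : ∀ ω, |Y ω| ≤ C) {t : ℝ} (ht1 : t ≤ 1) :
    C ∈ {x : ℝ | t ≤ cdfR P Y x} := by
  simp only [mem_setOf_eq, cdfR_top hb]; exact ht1

lemma quant_set_bdd (hb : ∀ ω, |Y ω| ≤ C) {t : ℝ} (ht : 0 < t) :
    ∀ x ∈ {x : ℝ | t ≤ cdfR P Y x}, -C ≤ x := by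
  intro x hx
  by_contra hlt
  push_neg at hlt
  rw [mem_setOf_eq, cdfR_bot hb hlt] at hx
  linarith

lemma quantR_le_of_cdf (hb : ∀ ω, |Y ω| ≤ C) {t c : ℝ} (ht : 0 < t) (h : t ≤ cdfR P Y c) :
    quantR P Y t ≤ c :=
  csInf_le ⟨-C, quant_set_bdd hb ht⟩ h

lemma cdf_of_quantR_le (hY : Measurable Y) (hb : ∀ ω, |Y ω| ≤ C) {t c : ℝ}
    (ht1 : t ≤ 1) (h : quantR P Y t ≤ c) : t ≤ cdfR P Y c := by
  apply cdfR_right hY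
  intro ε hε
  have h1 : sInf {x : ℝ | t ≤ cdfR P Y x} < c + ε := lt_of_le_of_lt h (by linarith)
  obtain ⟨x, hx, hxlt⟩ := exists_lt_of_csInf_lt ⟨C, quant_set_nonempty hb ht1⟩ h1
  exact le_trans hx (cdfR_mono hxlt.le)

lemma cdf_quantR (hY : Measurable Y) (hb : ∀ ω, |Y ω| ≤ C) {t : ℝ} (ht1 : t ≤ 1) :
    t ≤ cdfR P Y (quantR P Y t) :=
  cdf_of_quantR_le hY hb ht1 le_rfl

lemma quantR_bounds (hb : ∀ ω, |Y ω| ≤ C) {t : ℝ} (ht : 0 < t) (ht1 : t ≤ 1) :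
    -C ≤ quantR P Y t ∧ quantR P Y t ≤ C :=
  ⟨le_csInf ⟨C, quant_set_nonempty hb ht1⟩ (quant_set_bdd hb ht),
   csInf_le ⟨-C, quant_set_bdd hb ht⟩ (quant_set_nonempty hb ht1)⟩

lemma quantR_monoOn (hb : ∀ ω, |Y ω| ≤ C) : MonotoneOn (quantR P Y) (Ioc 0 1) := by
  intro s hs t ht hst
  exact csInf_le_csInf ⟨-C, quant_set_bdd hb hs.1⟩ ⟨C, quant_set_nonempty hb ht.2⟩
    (fun x hx => le_trans hst hx)

/-- near-left-continuity of the quantile function -/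
lemma quantR_left (hb : ∀ ω, |Y ω| ≤ C) {t : ℝ} (ht : t ∈ Ioo (0:ℝ) 1) {ε : ℝ} (hε : 0 < ε) :
    ∃ s ∈ Ioo (0:ℝ) t, quantR P Y t - ε < quantR P Y s := by
  by_contra hcon
  push_neg at hcon
  have key : ∀ s ∈ Ioo (0:ℝ) t, s ≤ cdfR P Y (quantR P Y t - ε/2) := by
    intro s hs
    have h1 : quantR P Y s < quantR P Y t - ε/2 :=
      lt_of_le_of_lt (hcon s hs) (by linarith)
    obtain ⟨x, hx, hxlt⟩ := exists_lt_of_csInf_lt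
      ⟨C, quant_set_nonempty hb (by linarith [ht.2, hs.2] : s ≤ 1)⟩ h1
    exact le_trans hx (cdfR_mono hxlt.le)
  have h2 : t ≤ cdfR P Y (quantR P Y t - ε/2) := by
    by_contra h3
    push_neg at h3
    set y := cdfR P Y (quantR P Y t - ε/2) with hy
    have hy0 : 0 ≤ y := cdfR_nonneg _
    set s := (max y (t/2) + t)/2 with hsdef
    have hs1 : 0 < s := by
      have := le_max_right y (t/2)
      have ht2 : 0 < t/2 := by linarith [ht.1]
      simp only [hsdef]; linarith [ht.1]
    have hs2 : s < t := by
      have hmax : max y (t/2) < t := max_lt h3 (by linarith [ht.1])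
      simp only [hsdef]; linarith
    have hs3 : y < s := by
      have := le_max_left y (t/2)
      simp only [hsdef]; linarith [h3, ht.1, le_max_left y (t/2)]
    exact absurd (key s ⟨hs1, hs2⟩) (by linarith)
  have h4 : quantR P Y t ≤ quantR P Y t - ε/2 :=
    csInf_le ⟨-C, quant_set_bdd hb ht.1⟩ h2
  linarith

/-- extend a function monotone on `(0,1)` to a monotone function on `ℝ` -/
def extQ (f : ℝ → ℝ) (A B : ℝ) : ℝ → ℝ := fun t => if t ≤ 0 then A else if t < 1 then f t else B

omit [IsProbabilityMeasure P] in
lemma extQ_eq_on {f : ℝ → ℝ} {A B t : ℝ} (ht : t ∈ Ioo (0:ℝ) 1) : extQ f A B t = f t := by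
  simp [extQ, not_le.2 ht.1, ht.2]

lemma extQ_mono {f : ℝ → ℝ} {A B : ℝ} (hf : MonotoneOn f (Ioo 0 1))
    (hAB : ∀ t ∈ Ioo (0:ℝ) 1, A ≤ f t ∧ f t ≤ B) : Monotone (extQ f A B) := by
  have hhalf : (1:ℝ)/2 ∈ Ioo (0:ℝ) 1 := by norm_num
  have hABle : A ≤ B := le_trans (hAB _ hhalf).1 (hAB _ hhalf).2
  intro s t hst
  unfold extQ
  by_cases hs0 : s ≤ 0
  · rw [if_pos hs0]
    by_cases ht0 : t ≤ 0
    · rw [if_pos ht0]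
    · rw [if_neg ht0]
      by_cases ht1 : t < 1
      · rw [if_pos ht1]; exact (hAB t ⟨lt_of_not_ge ht0, ht1⟩).1
      · rw [if_neg ht1]; exact hABle
  · have ht0 : ¬ t ≤ 0 := fun h => hs0 (hst.trans h)
    rw [if_neg hs0, if_neg ht0]
    by_cases hs1 : s < 1
    · by_cases ht1 : t < 1
      · rw [if_pos hs1, if_pos ht1]
        exact hf ⟨lt_of_not_ge hs0, hs1⟩ ⟨lt_of_not_ge ht0, ht1⟩ hst
      · rw [if_pos hs1, if_neg ht1]
        exact (hAB s ⟨lt_of_not_ge hs0, hs1⟩).2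
    · have ht1 : ¬ t < 1 := fun h => hs1 (lt_of_le_of_lt hst h)
      rw [if_neg hs1, if_neg ht1]

omit [IsProbabilityMeasure P] in
lemma extQ_range {f : ℝ → ℝ} {A B : ℝ} (hAB : ∀ t ∈ Ioo (0:ℝ) 1, A ≤ f t ∧ f t ≤ B) :
    ∀ t, extQ f A B t ∈ Icc (min A B) (max A B) := by
  intro t
  unfold extQ
  split_ifs with h1 h2
  · exact ⟨min_le_left _ _, le_max_left _ _⟩
  · have := hAB t ⟨lt_of_not_ge h1, h2⟩
    exact ⟨le_trans (min_le_left _ _) this.1, le_trans this.2 (le_max_right _ _)⟩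
  · exact ⟨min_le_right _ _, le_max_right _ _⟩

/-- left continuity within `Iic t` from monotonicity plus approximation from the left -/
lemma cwa_of_approx {g : ℝ → ℝ} {t : ℝ} (hg : Monotone g)
    (happ : ∀ ε > (0:ℝ), ∃ s ∈ Ioo (0:ℝ) t, g t - ε < g s) :
    ContinuousWithinAt g (Iic t) t := by
  rw [Metric.continuousWithinAt_iff]
  intro ε hε
  obtain ⟨s, hs, hgs⟩ := happ (ε/2) (by linarith)
  refine ⟨t - s, by linarith [hs.2], fun x hx hdist => ?_⟩
  rw [Real.dist_eq] at hdist ⊢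
  have hxt : x ≤ t := hx
  have hsx : s < x := by
    rw [abs_lt] at hdist
    linarith [hdist.1]
  have h1 : g s ≤ g x := hg hsx.le
  have h2 : g x ≤ g t := hg hxt
  rw [abs_lt]
  constructor <;> linarith

lemma vol_Iic_inter {θ : ℝ} (h0 : 0 ≤ θ) (h1 : θ ≤ 1) :
    volume (Iic θ ∩ Ioo (0:ℝ) 1) = ENNReal.ofReal θ := by
  rcases lt_or_ge θ 1 with h | h
  · have : Iic θ ∩ Ioo (0:ℝ) 1 = Ioc 0 θ := by
      ext x
      simp only [mem_inter_iff, mem_Iic, mem_Ioo, mem_Ioc]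
      constructor
      · rintro ⟨hx, hx0, _⟩; exact ⟨hx0, hx⟩
      · rintro ⟨hx0, hx⟩; exact ⟨hx, hx0, lt_of_le_of_lt hx h⟩
    rw [this, Real.volume_Ioc]
    norm_num
  · have hθ : θ = 1 := le_antisymm h1 h
    have : Iic θ ∩ Ioo (0:ℝ) 1 = Ioo 0 1 := by
      rw [hθ]
      ext x
      simp only [mem_inter_iff, mem_Iic, mem_Ioo]
      exact ⟨fun h => h.2, fun h => ⟨h.2.le, h⟩⟩
    rw [this, Real.volume_Ioo, hθ]
    norm_num

lemma map_unif {U : Ω → ℝ} (hU : UnifOn01 P U) :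
    Measure.map U P = volume.restrict (Ioo (0:ℝ) 1) := by
  haveI : IsProbabilityMeasure (Measure.map U P) :=
    Measure.isProbabilityMeasure_map hU.1.aemeasurable
  refine Measure.ext_of_Iic _ _ fun a => ?_
  rw [Measure.map_apply hU.1 measurableSet_Iic,
    Measure.restrict_apply measurableSet_Iic]
  have hpre : U ⁻¹' Iic a = {ω | U ω ≤ a} := rfl
  rw [hpre, ← ofReal_cdfR (P := P) (Y := U) a]
  rcases lt_or_ge a 0 with ha | ha
  · have h0 : cdfR P U a = 0 := by
      have h1 : cdfR P U a ≤ cdfR P U 0 := cdfR_mono ha.le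
      rw [hU.2 0 ⟨le_refl _, zero_le_one⟩] at h1
      exact le_antisymm h1 (cdfR_nonneg _)
    have hset : Iic a ∩ Ioo (0:ℝ) 1 = ∅ := by
      ext x
      simp only [mem_inter_iff, mem_Iic, mem_Ioo, mem_empty_iff_false, iff_false, not_and]
      intro hx hx0
      linarith
    rw [h0, hset]
    simp
  rcases le_or_gt a 1 with ha1 | ha1
  · have h0 : cdfR P U a = a := hU.2 a ⟨ha, ha1⟩
    have hset : Iic a ∩ Ioo (0:ℝ) 1 = Iic (cdfR P U a) ∩ Ioo (0:ℝ) 1 := by rw [h0]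
    rw [hset, vol_Iic_inter (by rw [h0]; exact ha) (by rw [h0]; exact ha1)]
  · have h0 : cdfR P U a = 1 := by
      have h1 : cdfR P U 1 ≤ cdfR P U a := cdfR_mono ha1.le
      rw [hU.2 1 ⟨zero_le_one, le_refl _⟩] at h1
      exact le_antisymm (cdfR_le_one _) h1
    have hset : Iic a ∩ Ioo (0:ℝ) 1 = Ioo (0:ℝ) 1 := by
      ext x
      simp only [mem_inter_iff, mem_Iic, mem_Ioo]
      constructor
      · rintro ⟨_, h⟩; exact h
      · intro h; exact ⟨by linarith [h.2], h⟩
    rw [h0, hset, Real.volume_Ioo]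
    norm_num

lemma quantile_map (hY : Measurable Y) (hb : ∀ ω, |Y ω| ≤ C) :
    Measure.map (extQ (quantR P Y) (-C) C) (volume.restrict (Ioo (0:ℝ) 1)) =
      Measure.map Y P := by
  set g := extQ (quantR P Y) (-C) C with hg
  have hbb : ∀ t ∈ Ioo (0:ℝ) 1, -C ≤ quantR P Y t ∧ quantR P Y t ≤ C :=
    fun t ht => quantR_bounds hb ht.1 ht.2.le
  have hmg : Monotone g := extQ_mono ((quantR_monoOn hb).mono Ioo_subset_Ioc_self) hbb
  haveI : IsFiniteMeasure (volume.restrict (Ioo (0:ℝ) 1)) := by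
    constructor
    rw [Measure.restrict_apply_univ, Real.volume_Ioo]
    norm_num
  haveI : IsFiniteMeasure (Measure.map g (volume.restrict (Ioo (0:ℝ) 1))) :=
    Measure.isFiniteMeasure_map _ _
  refine Measure.ext_of_Iic _ _ fun c => ?_
  rw [Measure.map_apply hmg.measurable measurableSet_Iic,
    Measure.map_apply hY measurableSet_Iic,
    Measure.restrict_apply (hmg.measurable measurableSet_Iic)]
  have hset : g ⁻¹' Iic c ∩ Ioo (0:ℝ) 1 = Iic (cdfR P Y c) ∩ Ioo (0:ℝ) 1 := by
    ext t
    simp only [mem_inter_iff, mem_preimage, mem_Iic, mem_Ioo]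
    constructor
    · rintro ⟨hgt, ht⟩
      refine ⟨?_, ht⟩
      rw [hg, extQ_eq_on ⟨ht.1, ht.2⟩] at hgt
      exact cdf_of_quantR_le hY hb ht.2.le hgt
    · rintro ⟨hct, ht⟩
      refine ⟨?_, ht⟩
      rw [hg, extQ_eq_on ⟨ht.1, ht.2⟩]
      exact quantR_le_of_cdf hb ht.1 hct
  rw [hset, vol_Iic_inter (cdfR_nonneg _) (cdfR_le_one _), ofReal_cdfR]
  rfl

lemma integrable_comp_bdd {u : ℝ → ℝ} (hu : Continuous u) {g : Ω → ℝ} {μ : Measure Ω}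
    [IsFiniteMeasure μ] (hg : Measurable g) {A B : ℝ} (hr : ∀ ω, g ω ∈ Icc A B) :
    Integrable (fun ω => u (g ω)) μ := by
  obtain ⟨K, hK⟩ := (isCompact_Icc (a := A) (b := B)).exists_bound_of_continuousOn
    hu.continuousOn
  refine Integrable.mono' (integrable_const K) ((hu.measurable.comp hg).aestronglyMeasurable)
    (Filter.Eventually.of_forall fun ω => ?_)
  exact hK _ (hr ω)

lemma integrableOn_comp_Ioo {u : ℝ → ℝ} (hu : Continuous u) {g : ℝ → ℝ}
    (hg : Measurable g) {A B : ℝ} (hr : ∀ t, g t ∈ Icc A B) :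
    IntegrableOn (fun t => u (g t)) (Ioo (0:ℝ) 1) volume := by
  haveI : IsFiniteMeasure (volume.restrict (Ioo (0:ℝ) 1)) := by
    constructor
    rw [Measure.restrict_apply_univ, Real.volume_Ioo]
    norm_num
  exact integrable_comp_bdd hu hg hr

/-- expected utility equals integral of utility of quantile -/
lemma EU_eq_quant (hY : Measurable Y) (hb : ∀ ω, |Y ω| ≤ C) {u : ℝ → ℝ} (hu : Continuous u) :
    ∫ ω, u (Y ω) ∂P = ∫ t in Ioo (0:ℝ) 1, u (quantR P Y t) := by
  have hbb : ∀ t ∈ Ioo (0:ℝ) 1, -C ≤ quantR P Y t ∧ quantR P Y t ≤ C :=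
    fun t ht => quantR_bounds hb ht.1 ht.2.le
  have hmg : Monotone (extQ (quantR P Y) (-C) C) :=
    extQ_mono ((quantR_monoOn hb).mono Ioo_subset_Ioc_self) hbb
  have h1 : ∫ ω, u (Y ω) ∂P = ∫ y, u y ∂(Measure.map Y P) :=
    (integral_map hY.aemeasurable hu.aestronglyMeasurable).symm
  rw [h1, ← quantile_map hY hb,
    integral_map hmg.measurable.aemeasurable hu.aestronglyMeasurable]
  exact setIntegral_congr_fun measurableSet_Ioo fun t ht => by rw [extQ_eq_on ht]

def Utld (U : Ω → ℝ) : Ω → ℝ := fun ω => if U ω ∈ Ioo (0:ℝ) 1 then U ω else 1/2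

omit [IsProbabilityMeasure P] in
lemma Utld_measurable {U : Ω → ℝ} (hU : Measurable U) : Measurable (Utld U) :=
  Measurable.ite (hU measurableSet_Ioo) hU measurable_const

omit [IsProbabilityMeasure P] in
lemma Utld_mem (U : Ω → ℝ) (ω : Ω) : Utld U ω ∈ Ioo (0:ℝ) 1 := by
  unfold Utld
  split_ifs with h
  · exact h
  · norm_num

lemma U_mem_ae {U : Ω → ℝ} (hU : UnifOn01 P U) : ∀ᵐ ω ∂P, U ω ∈ Ioo (0:ℝ) 1 := by
  have h1 : P (U ⁻¹' (Ioo (0:ℝ) 1)) = 1 := by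
    rw [← Measure.map_apply hU.1 measurableSet_Ioo, map_unif hU,
      Measure.restrict_apply measurableSet_Ioo, inter_self, Real.volume_Ioo]
    norm_num
  have h2 : P (U ⁻¹' (Ioo (0:ℝ) 1))ᶜ = 0 := by
    rw [measure_compl (hU.1 measurableSet_Ioo) (measure_ne_top _ _), h1, measure_univ]
    simp
  rw [MeasureTheory.ae_iff]
  convert h2 using 2
  rfl

lemma Utld_ae_eq {U : Ω → ℝ} (hU : UnifOn01 P U) : U =ᵐ[P] Utld U :=
  (U_mem_ae hU).mono fun ω hω => by simp [Utld, hω]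

lemma map_Utld {U : Ω → ℝ} (hU : UnifOn01 P U) :
    Measure.map (Utld U) P = volume.restrict (Ioo (0:ℝ) 1) := by
  rw [← Measure.map_congr (Utld_ae_eq hU), map_unif hU]

/-- change of variables: integrating a function of `Utld U` -/
lemma integral_comp_Utld {U : Ω → ℝ} (hU : UnifOn01 P U) {g : ℝ → ℝ} (hg : Measurable g)
    {u : ℝ → ℝ} (hu : Continuous u) :
    ∫ ω, u (g (Utld U ω)) ∂P = ∫ t in Ioo (0:ℝ) 1, u (g t) := by
  have h1 : ∫ ω, u (g (Utld U ω)) ∂P = ∫ t, u (g t) ∂(Measure.map (Utld U) P) :=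
    (integral_map (Utld_measurable hU.1).aemeasurable
      (hu.measurable.comp hg).aestronglyMeasurable).symm
  rw [h1, map_Utld hU]

section Comon

variable {n : ℕ} {Xv : Fin n → Ω → ℝ}

omit [IsProbabilityMeasure P] in
lemma comon_key (hcom : ∀ i j, ComonRV (Xv i) (Xv j)) {ω ω' : Ω}
    (h : (∑ i, Xv i ω) ≤ (∑ i, Xv i ω')) : ∀ i, Xv i ω ≤ Xv i ω' := by
  intro i
  by_contra hlt
  push_neg at hlt
  have hall : ∀ j, Xv j ω' ≤ Xv j ω := by
    intro j
    have := hcom i j ω ω'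
    nlinarith
  have : (∑ j, Xv j ω') < ∑ j, Xv j ω :=
    Finset.sum_lt_sum (fun j _ => hall j) ⟨i, Finset.mem_univ i, hlt⟩
  linarith

omit [IsProbabilityMeasure P] in
lemma comon_chain (hcom : ∀ i j, ComonRV (Xv i) (Xv j)) (β : Fin n → ℝ) :
    ∀ i j, {ω | β i < Xv i ω} ⊆ {ω | β j < Xv j ω} ∨
      {ω | β j < Xv j ω} ⊆ {ω | β i < Xv i ω} := by
  intro i j
  by_contra hcon
  push_neg at hcon
  obtain ⟨ω, hω1, hω2⟩ := not_subset.1 hcon.1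
  obtain ⟨ω', hω'1, hω'2⟩ := not_subset.1 hcon.2
  simp only [mem_setOf_eq, not_lt] at hω1 hω2 hω'1 hω'2
  have := hcom i j ω ω'
  nlinarith

lemma chain_max {E : Fin n → Set Ω} (hch : ∀ i j, E i ⊆ E j ∨ E j ⊆ E i) (hn : 1 ≤ n) :
    ∃ i₀, ∀ i, E i ⊆ E i₀ := by
  classical
  have key : ∀ s : Finset (Fin n), s.Nonempty → ∃ i₀ ∈ s, ∀ i ∈ s, E i ⊆ E i₀ := by
    intro s
    induction s using Finset.induction_on with
    | empty => intro h; exact absurd h (by simp)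
    | insert a s hnotmem ih =>
      intro _
      rcases s.eq_empty_or_nonempty with hs | hs
      · subst hs
        exact ⟨a, by simp, fun i hi => by
          simp only [Finset.mem_insert, Finset.notMem_empty, or_false] at hi
          subst hi; exact subset_rfl⟩
      · obtain ⟨j₀, hj₀s, hj₀⟩ := ih hs
        rcases hch a j₀ with h | h
        · exact ⟨j₀, Finset.mem_insert_of_mem hj₀s, fun i hi => by
            rcases Finset.mem_insert.1 hi with rfl | hi
            · exact h
            · exact hj₀ i hi⟩
        · exact ⟨a, Finset.mem_insert_self a s, fun i hi => by
            rcases Finset.mem_insert.1 hi with rfl | hi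
            · exact subset_rfl
            · exact (hj₀ i hi).trans h⟩
  obtain ⟨i₀, _, h⟩ := key Finset.univ (Finset.univ_nonempty_iff.2 ⟨⟨0, hn⟩⟩)
  exact ⟨i₀, fun i => h i (Finset.mem_univ i)⟩

lemma chain_min {E : Fin n → Set Ω} (hch : ∀ i j, E i ⊆ E j ∨ E j ⊆ E i) (hn : 1 ≤ n) :
    ∃ i₀, ∀ i, E i₀ ⊆ E i := by
  have hch' : ∀ i j, (E i)ᶜ ⊆ (E j)ᶜ ∨ (E j)ᶜ ⊆ (E i)ᶜ := by
    intro i j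
    rcases hch i j with h | h
    · exact Or.inr (compl_subset_compl.2 h)
    · exact Or.inl (compl_subset_compl.2 h)
  obtain ⟨i₀, h⟩ := chain_max hch' hn
  exact ⟨i₀, fun i => by
    have := h i
    rwa [compl_subset_compl] at this⟩

end Comon

lemma cdfR_congr {Z : Ω → ℝ} (h : ∀ᵐ ω ∂P, Y ω = Z ω) : cdfR P Y = cdfR P Z := by
  funext x
  unfold cdfR
  congr 1
  apply measure_congr
  filter_upwards [h] with ω hω
  change (Y ω ≤ x) = (Z ω ≤ x)
  rw [hω]

lemma quantR_congr {Z : Ω → ℝ} (h : ∀ᵐ ω ∂P, Y ω = Z ω) : quantR P Y = quantR P Z := by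
  funext t
  unfold quantR
  rw [cdfR_congr h]

lemma quant_add {n : ℕ} {Xv : Fin n → Ω → ℝ} (hn : 1 ≤ n)
    (hcom : ∀ i j, ComonRV (Xv i) (Xv j)) (hmeas : ∀ i, Measurable (Xv i))
    (Cv : Fin n → ℝ) (hbv : ∀ i ω, |Xv i ω| ≤ Cv i) {t : ℝ} (ht : t ∈ Ioo (0:ℝ) 1) :
    ∑ i, quantR P (Xv i) t = quantR P (fun ω => ∑ i, Xv i ω) t := by
  classical
  set S : Ω → ℝ := fun ω => ∑ i, Xv i ω with hSdef
  have hbS : ∀ ω, |S ω| ≤ ∑ i, Cv i := fun ω =>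
    le_trans (Finset.abs_sum_le_sum_abs _ _) (Finset.sum_le_sum fun i _ => hbv i ω)
  have hnpos : (0:ℝ) < n := by exact_mod_cast hn
  have huniv : (Finset.univ : Finset (Fin n)).Nonempty :=
    Finset.univ_nonempty_iff.2 ⟨⟨0, hn⟩⟩
  apply le_antisymm
  · -- ∑ q_i ≤ q_S
    apply le_csInf ⟨∑ i, Cv i, quant_set_nonempty hbS ht.2.le⟩
    intro x hx
    rw [mem_setOf_eq] at hx
    apply le_of_forall_pos_le_add
    intro ε hε
    by_contra hcontra
    push_neg at hcontra
    set β : Fin n → ℝ := fun i => quantR P (Xv i) t - ε/n with hβ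
    obtain ⟨i₀, hi₀⟩ := chain_min (comon_chain hcom β) hn
    have hsub : {ω | S ω ≤ x} ⊆ {ω | Xv i₀ ω ≤ β i₀} := by
      intro ω hω
      rw [mem_setOf_eq] at hω ⊢
      by_contra hc
      push_neg at hc
      have hall : ∀ i, β i < Xv i ω := fun i => hi₀ i hc
      have hsumβ : (∑ i, β i) < S ω :=
        Finset.sum_lt_sum_of_nonempty huniv fun i _ => hall i
      have hβsum : (∑ i, β i) = (∑ i, quantR P (Xv i) t) - ε := by
        rw [hβ]
        rw [Finset.sum_sub_distrib]
        congr 1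
        rw [Finset.sum_const, Finset.card_univ, Fintype.card_fin]
        rw [nsmul_eq_mul]
        field_simp
      rw [hβsum] at hsumβ
      linarith
    have h1 : t ≤ cdfR P (Xv i₀) (β i₀) := by
      refine le_trans hx ?_
      exact ENNReal.toReal_mono (measure_ne_top _ _) (measure_mono hsub)
    have h2 : quantR P (Xv i₀) t ≤ β i₀ := quantR_le_of_cdf (hbv i₀) ht.1 h1
    rw [hβ] at h2
    simp only at h2
    have : (0:ℝ) < ε/n := by positivity
    linarith
  · -- q_S ≤ ∑ q_i
    apply quantR_le_of_cdf hbS ht.1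
    set c : ℝ := ∑ i, quantR P (Xv i) t with hc
    set β : Fin n → ℝ := fun i => quantR P (Xv i) t with hβ
    obtain ⟨i₀, hi₀⟩ := chain_max (comon_chain hcom β) hn
    have hsub : {ω | Xv i₀ ω ≤ β i₀} ⊆ {ω | S ω ≤ c} := by
      intro ω hω
      rw [mem_setOf_eq] at hω ⊢
      by_contra hcon
      push_neg at hcon
      have hex : ∃ i, β i < Xv i ω := by
        by_contra hall
        push_neg at hall
        have : S ω ≤ c := by
          rw [hc]
          exact Finset.sum_le_sum fun i _ => hall i
        linarith
      obtain ⟨i, hi⟩ := hex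
      have : ω ∈ {ω | β i₀ < Xv i₀ ω} := hi₀ i hi
      rw [mem_setOf_eq] at this
      linarith
    have h1 : t ≤ cdfR P (Xv i₀) (β i₀) := cdf_quantR (hmeas i₀) (hbv i₀) ht.2.le
    exact le_trans h1 (ENNReal.toReal_mono (measure_ne_top _ _) (measure_mono hsub))

omit [IsProbabilityMeasure P] in
lemma tuple_bounds {n : ℕ} (f : Fin n → ℝ → ℝ) (hf : ∀ i, MonotoneOn (f i) (Ioo 0 1))
    {q : ℝ → ℝ} (hsum : ∀ t ∈ Ioo (0:ℝ) 1, (∑ i, f i t) = q t)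
    {m M : ℝ} (hq : ∀ t ∈ Ioo (0:ℝ) 1, m ≤ q t ∧ q t ≤ M) (i : Fin n) :
    ∀ t ∈ Ioo (0:ℝ) 1, f i (1/2) - (M - m) ≤ f i t ∧ f i t ≤ f i (1/2) + (M - m) := by
  classical
  have hhalf : (1:ℝ)/2 ∈ Ioo (0:ℝ) 1 := by norm_num
  intro t ht
  have hrest : ∀ s ∈ Ioo (0:ℝ) 1, (∑ j ∈ Finset.univ.erase i, f j s) = q s - f i s := by
    intro s hs
    have h0 := hsum s hs
    have h1 := Finset.add_sum_erase Finset.univ (fun j => f j s) (Finset.mem_univ i)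
    linarith
  rcases le_total t (1/2 : ℝ) with h | h
  · constructor
    · have hterm : (∑ j ∈ Finset.univ.erase i, f j t) ≤ ∑ j ∈ Finset.univ.erase i, f j (1/2) :=
        Finset.sum_le_sum fun j _ => hf j ht hhalf h
      have h1 := hrest t ht
      have h2 := hrest (1/2) hhalf
      have h3 := (hq t ht).1
      have h4 := (hq (1/2) hhalf).2
      linarith
    · exact le_trans (hf i ht hhalf h) (by linarith [(hq (1/2) hhalf).1, (hq (1/2) hhalf).2])
  · constructor
    · exact le_trans (by linarith [(hq (1/2) hhalf).1, (hq (1/2) hhalf).2]) (hf i hhalf ht h)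
    · have hterm : (∑ j ∈ Finset.univ.erase i, f j (1/2)) ≤ ∑ j ∈ Finset.univ.erase i, f j t :=
        Finset.sum_le_sum fun j _ => hf j hhalf ht h
      have h1 := hrest t ht
      have h2 := hrest (1/2) hhalf
      have h3 := (hq t ht).2
      have h4 := (hq (1/2) hhalf).1
      linarith

omit [IsProbabilityMeasure P] in
lemma abs_le_of_mem_Icc {v a b : ℝ} (h : v ∈ Icc a b) : |v| ≤ |a| + |b| := by
  rw [abs_le]
  constructor
  · linarith [neg_abs_le a, abs_nonneg b, h.1]
  · linarith [le_abs_self b, abs_nonneg a, h.2]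


lemma ext_package {f : ℝ → ℝ} {A B : ℝ} (hf : MonotoneOn f (Ioo 0 1))
    (hAB : ∀ t ∈ Ioo (0:ℝ) 1, A ≤ f t ∧ f t ≤ B) :
    ∃ (g : ℝ → ℝ) (K : ℝ), Monotone g ∧ (∀ t ∈ Ioo (0:ℝ) 1, g t = f t) ∧ ∀ t, |g t| ≤ K :=
  ⟨extQ f A B, |min A B| + |max A B|, extQ_mono hf hAB, fun t ht => extQ_eq_on ht,
    fun t => abs_le_of_mem_Icc (extQ_range hAB t)⟩


end Helpers


noncomputable section

open MeasureTheory Set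

/-- A tuple `(f₂*,…,fₙ*)` of quantile functions summing to `F_{w−X}⁻¹`
maximizes `∫₀¹ Σ λ_i u_i(f_i(t)) dt` over such tuples iff `(f₂*(U),…,fₙ*(U))` maximizes
`Σ λ_i E_P[u_i(X_i)]` over all comonotonic vectors of bounded random variables summing
a.s. to `w − X`, where `U ~ Uni(0,1)` satisfies `w − X = F_{w−X}⁻¹(U)` a.s. -/
theorem statement3
    {Ω : Type*} [MeasurableSpace Ω] (P : Measure Ω) [IsProbabilityMeasure P]
    (hP : NonatomicM P)
    (n : ℕ) (hn : 1 ≤ n)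
    (u : Fin n → ℝ → ℝ) (hu : ∀ i, IsUtility (u i))
    (lam : Fin n → ℝ) (hlam : ∀ i, 0 < lam i)
    (X : Ω → ℝ) (hX : IsBddRV X) (w : ℝ)
    (U : Ω → ℝ) (hU : UnifOn01 P U)
    (hUX : ∀ᵐ ω ∂P, w - X ω = quantR P (fun ω' => w - X ω') (U ω))
    (fstar : Fin n → ℝ → ℝ) (hf : ∀ i, IsQuantFun (fstar i))
    (hfsum : ∀ t ∈ Ioo (0:ℝ) 1, (∑ i, fstar i t) = quantR P (fun ω => w - X ω) t) :
    (∀ f : Fin n → ℝ → ℝ, (∀ i, IsQuantFun (f i)) →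
        (∀ t ∈ Ioo (0:ℝ) 1, (∑ i, f i t) = quantR P (fun ω => w - X ω) t) →
        (∫ t in Ioo (0:ℝ) 1, ∑ i, lam i * u i (f i t)) ≤
          ∫ t in Ioo (0:ℝ) 1, ∑ i, lam i * u i (fstar i t))
    ↔
    (∀ Xv : Fin n → Ω → ℝ, (∀ i, IsBddRV (Xv i)) →
        (∀ i j : Fin n, ComonRV (Xv i) (Xv j)) →
        (∀ᵐ ω ∂P, (∑ i, Xv i ω) = w - X ω) →
        (∑ i, lam i * EUf P (u i) (Xv i)) ≤
          ∑ i, lam i * EUf P (u i) (fun ω => fstar i (U ω))) := by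
  classical
  obtain ⟨hXmeas, CX, hCX⟩ := hX
  set CW : ℝ := |w| + CX with hCWdef
  have hbW : ∀ ω, |w - X ω| ≤ CW := by
    intro ω
    have h1 := abs_add_le w (-(X ω))
    rw [abs_neg] at h1
    have h2 : w - X ω = w + -(X ω) := by ring
    rw [h2, hCWdef]
    exact le_trans h1 (by linarith [hCX ω])
  have hq0b : ∀ t ∈ Ioo (0:ℝ) 1, -CW ≤ quantR P (fun ω => w - X ω) t ∧
      quantR P (fun ω => w - X ω) t ≤ CW :=
    fun t ht => quantR_bounds hbW ht.1 ht.2.le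
  have hu_cont : ∀ i, Continuous (u i) := fun i =>
    continuous_iff_continuousAt.2 fun x => ((hu i).1 x).continuousAt
  -- package the fstar tuple
  have hfb : ∀ i, ∀ t ∈ Ioo (0:ℝ) 1,
      fstar i (1/2) - (CW - -CW) ≤ fstar i t ∧ fstar i t ≤ fstar i (1/2) + (CW - -CW) :=
    fun i => tuple_bounds fstar (fun j => (hf j).1) hfsum hq0b i
  obtain ⟨gs, Ks, hgsm, hgse, hgsK⟩ :
      ∃ (gs : Fin n → ℝ → ℝ) (Ks : Fin n → ℝ), (∀ i, Monotone (gs i)) ∧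
        (∀ i, ∀ t ∈ Ioo (0:ℝ) 1, gs i t = fstar i t) ∧ (∀ i t, |gs i t| ≤ Ks i) := by
    choose gs Ks h1 h2 h3 using fun i => ext_package (hf i).1 (hfb i)
    exact ⟨gs, Ks, h1, h2, h3⟩
  have hstar_i : ∀ i, EUf P (u i) (fun ω => fstar i (U ω)) =
      ∫ t in Ioo (0:ℝ) 1, u i (fstar i t) := by
    intro i
    have h1 : EUf P (u i) (fun ω => fstar i (U ω)) = ∫ ω, u i (gs i (Utld U ω)) ∂P := by
      unfold EUf
      apply integral_congr_ae
      filter_upwards [U_mem_ae hU] with ω hω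
      have hUt : Utld U ω = U ω := by simp [Utld, hω]
      rw [hUt, hgse i _ hω]
    rw [h1, integral_comp_Utld hU (hgsm i).measurable (hu_cont i)]
    exact setIntegral_congr_fun measurableSet_Ioo fun t ht => by rw [hgse i t ht]
  have hint_star : ∀ i, IntegrableOn (fun t => u i (fstar i t)) (Ioo (0:ℝ) 1) volume := by
    intro i
    refine (integrableOn_comp_Ioo (hu_cont i) (hgsm i).measurable
      (fun t => ⟨(abs_le.1 (hgsK i t)).1, (abs_le.1 (hgsK i t)).2⟩)).congr_fun
      (fun t ht => by beta_reduce; rw [hgse i t ht]) measurableSet_Ioo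
  have hRHS : (∫ t in Ioo (0:ℝ) 1, ∑ i, lam i * u i (fstar i t))
      = ∑ i, lam i * EUf P (u i) (fun ω => fstar i (U ω)) := by
    rw [integral_finset_sum Finset.univ (fun i _ => (hint_star i).const_mul (lam i))]
    refine Finset.sum_congr rfl fun i _ => ?_
    rw [integral_const_mul, hstar_i i]
  constructor
  · -- quantile optimality implies RV optimality
    intro hmax Xv hXvb hXvcom hXvsum
    have hXvmeas : ∀ i, Measurable (Xv i) := fun i => (hXvb i).1
    choose Cv hCv using fun i => (hXvb i).2
    have hqvb : ∀ i, ∀ t ∈ Ioo (0:ℝ) 1,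
        -(Cv i) ≤ quantR P (Xv i) t ∧ quantR P (Xv i) t ≤ Cv i :=
      fun i t ht => quantR_bounds (hCv i) ht.1 ht.2.le
    obtain ⟨g, K, hgm, hgeq, hgK⟩ :
        ∃ (g : Fin n → ℝ → ℝ) (K : Fin n → ℝ), (∀ i, Monotone (g i)) ∧
          (∀ i, ∀ t ∈ Ioo (0:ℝ) 1, g i t = quantR P (Xv i) t) ∧ (∀ i t, |g i t| ≤ K i) := by
      choose g K h1 h2 h3 using fun i =>
        ext_package ((quantR_monoOn (hCv i)).mono Ioo_subset_Ioc_self) (hqvb i)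
      exact ⟨g, K, h1, h2, h3⟩
    have hgq : ∀ i, IsQuantFun (g i) := by
      intro i
      refine ⟨(hgm i).monotoneOn _, fun t ht => ?_⟩
      apply cwa_of_approx (hgm i)
      intro ε hε
      obtain ⟨s, hs, hlt⟩ := quantR_left (P := P) (hCv i) ht hε
      have hsIoo : s ∈ Ioo (0:ℝ) 1 := ⟨hs.1, hs.2.trans ht.2⟩
      refine ⟨s, hs, ?_⟩
      rw [hgeq i t ht, hgeq i s hsIoo]
      exact hlt
    have hgsum : ∀ t ∈ Ioo (0:ℝ) 1, (∑ i, g i t) = quantR P (fun ω => w - X ω) t := by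
      intro t ht
      have h1 : (∑ i, g i t) = ∑ i, quantR P (Xv i) t :=
        Finset.sum_congr rfl fun i _ => hgeq i t ht
      rw [h1, quant_add hn hXvcom hXvmeas Cv hCv ht, quantR_congr hXvsum]
    have hkey := hmax g hgq hgsum
    have hEU : ∀ i, EUf P (u i) (Xv i) = ∫ t in Ioo (0:ℝ) 1, u i (g i t) := by
      intro i
      unfold EUf
      rw [EU_eq_quant (hXvmeas i) (hCv i) (hu_cont i)]
      exact setIntegral_congr_fun measurableSet_Ioo fun t ht => by rw [hgeq i t ht]
    have hintv : ∀ i, IntegrableOn (fun t => u i (g i t)) (Ioo (0:ℝ) 1) volume :=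
      fun i => integrableOn_comp_Ioo (hu_cont i) (hgm i).measurable
        (fun t => ⟨(abs_le.1 (hgK i t)).1, (abs_le.1 (hgK i t)).2⟩)
    have hLHS : (∑ i, lam i * EUf P (u i) (Xv i))
        = ∫ t in Ioo (0:ℝ) 1, ∑ i, lam i * u i (g i t) := by
      rw [integral_finset_sum Finset.univ (fun i _ => (hintv i).const_mul (lam i))]
      refine (Finset.sum_congr rfl fun i _ => ?_).symm
      rw [integral_const_mul, hEU i]
    rw [hLHS, ← hRHS]
    exact hkey
  · -- RV optimality implies quantile optimality
    intro hmax f hfq hfsumf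
    have hfbnd : ∀ i, ∀ t ∈ Ioo (0:ℝ) 1,
        f i (1/2) - (CW - -CW) ≤ f i t ∧ f i t ≤ f i (1/2) + (CW - -CW) :=
      fun i => tuple_bounds f (fun j => (hfq j).1) hfsumf hq0b i
    obtain ⟨g, K, hgm, hgeq, hgK⟩ :
        ∃ (g : Fin n → ℝ → ℝ) (K : Fin n → ℝ), (∀ i, Monotone (g i)) ∧
          (∀ i, ∀ t ∈ Ioo (0:ℝ) 1, g i t = f i t) ∧ (∀ i t, |g i t| ≤ K i) := by
      choose g K h1 h2 h3 using fun i => ext_package (hfq i).1 (hfbnd i)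
      exact ⟨g, K, h1, h2, h3⟩
    have hbdd : ∀ i, IsBddRV (fun ω => g i (Utld U ω)) := fun i =>
      ⟨(hgm i).measurable.comp (Utld_measurable hU.1), K i, fun ω => hgK i _⟩
    have hcm : ∀ i j, ComonRV (fun ω => g i (Utld U ω)) (fun ω => g j (Utld U ω)) := by
      intro i j ω ω'
      rcases le_total (Utld U ω) (Utld U ω') with h | h
      · nlinarith [hgm i h, hgm j h]
      · nlinarith [hgm i h, hgm j h]
    have hsumXv : ∀ᵐ ω ∂P, (∑ i, g i (Utld U ω)) = w - X ω := by
      filter_upwards [U_mem_ae hU, hUX] with ω h1 h2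
      have hUt : Utld U ω = U ω := by simp [Utld, h1]
      rw [hUt]
      have h3 : (∑ i, g i (U ω)) = ∑ i, f i (U ω) :=
        Finset.sum_congr rfl fun i _ => hgeq i _ h1
      rw [h3, hfsumf (U ω) h1]
      exact h2.symm
    have hkey := hmax (fun i ω => g i (Utld U ω)) hbdd hcm hsumXv
    have hEUi : ∀ i, EUf P (u i) (fun ω => g i (Utld U ω)) =
        ∫ t in Ioo (0:ℝ) 1, u i (f i t) := by
      intro i
      unfold EUf
      rw [integral_comp_Utld hU (hgm i).measurable (hu_cont i)]
      exact setIntegral_congr_fun measurableSet_Ioo fun t ht => by rw [hgeq i t ht]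
    have hintf : ∀ i, IntegrableOn (fun t => u i (f i t)) (Ioo (0:ℝ) 1) volume := by
      intro i
      refine (integrableOn_comp_Ioo (hu_cont i) (hgm i).measurable
        (fun t => ⟨(abs_le.1 (hgK i t)).1, (abs_le.1 (hgK i t)).2⟩)).congr_fun
        (fun t ht => by beta_reduce; rw [hgeq i t ht]) measurableSet_Ioo
    have hL : (∫ t in Ioo (0:ℝ) 1, ∑ i, lam i * u i (f i t))
        = ∑ i, lam i * EUf P (u i) (fun ω => g i (Utld U ω)) := by
      rw [integral_finset_sum Finset.univ (fun i _ => (hintf i).const_mul (lam i))]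
      refine Finset.sum_congr rfl fun i _ => ?_
      rw [integral_const_mul, hEUi i]
    rw [hL, hRHS]
    exact hkey


end
end
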